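/- arXiv:2208.03202 — 2 statements merged into one kernel-verified Lean document; each statement's English description precedes it below -/
import Mathlib

section
/- For n ≥ 4, every generating set of the monoid IOF_n^par has at least 3n−6 elements. -/
/-- A partial injection on `{1,...,n}`, represented by its graph. -/
structure PInj (n : ℕ) where
  R : ℕ → ℕ → Prop
  memL : ∀ ⦃x y⦄, R x y → x ∈ Set.Icc 1 n
  memR : ∀ ⦃x y⦄, R x y → y ∈ Set.Icc 1 n
  func : ∀ ⦃x y y'⦄, R x y → R x y' → y = y'
  inj : ∀ ⦃x x' y⦄, R x y → R x' y → x = x'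

namespace PInj

variable {n : ℕ}

@[ext] theorem ext {a b : PInj n} (h : ∀ x y, a.R x y ↔ b.R x y) : a = b := by
  cases a; cases b
  simp only [mk.injEq]
  funext x y
  exact propext (h x y)

instance : Mul (PInj n) :=
  ⟨fun a b =>
    { R := fun x z => ∃ y, a.R x y ∧ b.R y z
      memL := by rintro x z ⟨y, h1, _⟩; exact a.memL h1
      memR := by rintro x z ⟨y, _, h2⟩; exact b.memR h2
      func := by
        rintro x z z' ⟨y, h1, h2⟩ ⟨y', h1', h2'⟩
        obtain rfl := a.func h1 h1'
        exact b.func h2 h2'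
      inj := by
        rintro x x' z ⟨y, h1, h2⟩ ⟨y', h1', h2'⟩
        obtain rfl := b.inj h2 h2'
        exact a.inj h1 h1' }⟩

instance : One (PInj n) :=
  ⟨{ R := fun x y => x ∈ Set.Icc 1 n ∧ y = x
     memL := by rintro x y ⟨h, rfl⟩; exact h
     memR := by rintro x y ⟨h, rfl⟩; exact h
     func := by rintro x y y' ⟨_, rfl⟩ ⟨_, rfl⟩; rfl
     inj := by rintro x x' y ⟨_, rfl⟩ ⟨_, h⟩; exact h }⟩

instance : Monoid (PInj n) where
  mul_assoc a b c := by
    ext x y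
    constructor
    · rintro ⟨z, ⟨w, h1, h2⟩, h3⟩; exact ⟨w, h1, z, h2, h3⟩
    · rintro ⟨w, h1, z, h2, h3⟩; exact ⟨z, ⟨w, h1, h2⟩, h3⟩
  one_mul a := by
    ext x y
    constructor
    · rintro ⟨z, ⟨_, rfl⟩, h⟩; exact h
    · intro h; exact ⟨x, ⟨a.memL h, rfl⟩, h⟩
  mul_one a := by
    ext x y
    constructor
    · rintro ⟨z, h, _, rfl⟩; exact h
    · intro h; exact ⟨y, h, a.memR h, rfl⟩

/-- The inverse of a partial injection. -/
def inv (a : PInj n) : PInj n where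
  R := fun x y => a.R y x
  memL := by intro x y h; exact a.memR h
  memR := by intro x y h; exact a.memL h
  func := by intro x y y' h h'; exact a.inj h h'
  inj := by intro x x' y h h'; exact a.func h h'

/-- The domain of a partial injection. -/
def dom (a : PInj n) : Set ℕ := {x | ∃ y, a.R x y}

/-- The image of a partial injection. -/
def im (a : PInj n) : Set ℕ := {y | ∃ x, a.R x y}

end PInj

/-- The strict fence (zig-zag) order on `{1,...,n}`: `x ≺ y` iff `x` is odd and
`x`, `y` are adjacent.  It is generated by `i ≺ i+1` for odd `i` and `i+1 ≺ i`
for even `i`. -/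
def FenceLt (x y : ℕ) : Prop := Odd x ∧ (y = x + 1 ∨ x = y + 1)

/-- Membership in `IOF_n^par`: order-preserving, parity-preserving,
fence-preserving, and with fence-preserving inverse. -/
def IsIOF {n : ℕ} (a : PInj n) : Prop :=
  (∀ ⦃x y x' y'⦄, a.R x y → a.R x' y' → x < x' → y < y') ∧
  (∀ ⦃x y⦄, a.R x y → x % 2 = y % 2) ∧
  (∀ ⦃x y x' y'⦄, a.R x y → a.R x' y' → FenceLt x x' → FenceLt y y') ∧
  (∀ ⦃x y x' y'⦄, a.R x y → a.R x' y' → FenceLt y y' → FenceLt x x')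

/-- A partial identity: every point of the domain is fixed. -/
def IsPartialId {n : ℕ} (a : PInj n) : Prop := ∀ ⦃x y⦄, a.R x y → y = x

/-- The partial identity `v_i` with domain `{1,...,n} \ {i}`. -/
def vMap (n i : ℕ) : PInj n where
  R := fun x y => x ∈ Set.Icc 1 n ∧ x ≠ i ∧ y = x
  memL := by rintro x y ⟨h, _, rfl⟩; exact h
  memR := by rintro x y ⟨h, _, rfl⟩; exact h
  func := by rintro x y y' ⟨_, _, rfl⟩ ⟨_, _, rfl⟩; rfl
  inj := by rintro x x' y ⟨_, _, rfl⟩ ⟨_, _, h⟩; exact h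

/-- The map `u_i` with domain `{1,...,i} ∪ {i+4,...,n}`, sending `ρ ↦ ρ+2` for
`ρ ≤ i` and `ρ ↦ ρ` for `ρ ≥ i+4`. -/
def uMap (n i : ℕ) : PInj n where
  R := fun x y => x ∈ Set.Icc 1 n ∧ y ∈ Set.Icc 1 n ∧
        ((x ≤ i ∧ y = x + 2) ∨ (i + 4 ≤ x ∧ y = x))
  memL := by rintro x y ⟨h, _, _⟩; exact h
  memR := by rintro x y ⟨_, h, _⟩; exact h
  func := by
    rintro x y y' ⟨_, _, (⟨hx, rfl⟩ | ⟨hx, rfl⟩)⟩ ⟨_, _, (⟨hx', rfl⟩ | ⟨hx', rfl⟩)⟩ <;> omega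
  inj := by
    rintro x x' y ⟨_, _, (⟨hx, rfl⟩ | ⟨hx, rfl⟩)⟩ ⟨_, _, (⟨hx', h'⟩ | ⟨hx', h'⟩)⟩ <;> omega

/-- The set `J_i = {1,...,i} ∪ {i+4,...,n}`. -/
def Jset (n i : ℕ) : Set ℕ := {x | (1 ≤ x ∧ x ≤ i) ∨ (i + 4 ≤ x ∧ x ≤ n)}

/-- `G` is a generating set of the monoid `IOF_n^par`: it consists of elements of
`IOF_n^par` and every element of `IOF_n^par` is a finite product of elements of `G`. -/
def Generates (n : ℕ) (G : Set (PInj n)) : Prop :=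
  (∀ g ∈ G, IsIOF g) ∧
  ∀ a : PInj n, IsIOF a →
    ∃ l : List (PInj n), (∀ b ∈ l, b ∈ G) ∧ l.prod = a

section AuxDefs

/-- The map `x ↦ x+2` on `{1,...,n-2}`. -/
def upMap (n : ℕ) : PInj n where
  R := fun x y => x ∈ Set.Icc 1 n ∧ y ∈ Set.Icc 1 n ∧ y = x + 2
  memL := by rintro x y ⟨h, _, _⟩; exact h
  memR := by rintro x y ⟨_, h, _⟩; exact h
  func := by rintro x y y' ⟨_, _, h⟩ ⟨_, _, h'⟩; omega
  inj := by rintro x x' y ⟨_, _, h⟩ ⟨_, _, h'⟩; omega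

/-- The map `x ↦ x-2` on `{3,...,n}`. -/
def dnMap (n : ℕ) : PInj n where
  R := fun x y => x ∈ Set.Icc 1 n ∧ y ∈ Set.Icc 1 n ∧ y + 2 = x
  memL := by rintro x y ⟨h, _, _⟩; exact h
  memR := by rintro x y ⟨_, h, _⟩; exact h
  func := by rintro x y y' ⟨_, _, h⟩ ⟨_, _, h'⟩; omega
  inj := by rintro x x' y ⟨_, _, h⟩ ⟨_, _, h'⟩; omega

/-- identity on `{1,...,i}`, `x ↦ x-2` on `{i+4,...,n}`. -/
def wMap (n i : ℕ) : PInj n where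
  R := fun x y => x ∈ Set.Icc 1 n ∧ y ∈ Set.Icc 1 n ∧
        ((x ≤ i ∧ y = x) ∨ (i + 4 ≤ x ∧ y + 2 = x))
  memL := by rintro x y ⟨h, _, _⟩; exact h
  memR := by rintro x y ⟨_, h, _⟩; exact h
  func := by rintro x y y' ⟨_, _, h⟩ ⟨_, _, h'⟩; omega
  inj := by rintro x x' y ⟨_, _, h⟩ ⟨_, _, h'⟩; omega

/-- `x ↦ x-2` on `{3,...,i+2}`, identity on `{i+4,...,n}`; the inverse of `uMap n i`. -/
def uInvMap (n i : ℕ) : PInj n where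
  R := fun x y => x ∈ Set.Icc 1 n ∧ y ∈ Set.Icc 1 n ∧
        ((x ≤ i + 2 ∧ y + 2 = x) ∨ (i + 4 ≤ x ∧ y = x))
  memL := by rintro x y ⟨h, _, _⟩; exact h
  memR := by rintro x y ⟨_, h, _⟩; exact h
  func := by rintro x y y' ⟨_, _, h⟩ ⟨_, _, h'⟩; omega
  inj := by rintro x x' y ⟨_, _, h⟩ ⟨_, _, h'⟩; omega

/-- identity on `{1,...,i}`, `x ↦ x+2` on `{i+2,...,n-2}`; the inverse of `wMap n i`. -/
def wInvMap (n i : ℕ) : PInj n where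
  R := fun x y => x ∈ Set.Icc 1 n ∧ y ∈ Set.Icc 1 n ∧
        ((x ≤ i ∧ y = x) ∨ (i + 2 ≤ x ∧ y = x + 2))
  memL := by rintro x y ⟨h, _, _⟩; exact h
  memR := by rintro x y ⟨_, h, _⟩; exact h
  func := by rintro x y y' ⟨_, _, h⟩ ⟨_, _, h'⟩; omega
  inj := by rintro x x' y ⟨_, _, h⟩ ⟨_, _, h'⟩; omega

namespace PInj

variable {n : ℕ}

theorem mul_R (b c : PInj n) (x y : ℕ) :
    (b * c).R x y ↔ ∃ z, b.R x z ∧ c.R z y := Iff.rfl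

theorem one_R (x y : ℕ) : (1 : PInj n).R x y ↔ x ∈ Set.Icc 1 n ∧ y = x := Iff.rfl

theorem upMap_R (x y : ℕ) : (upMap n).R x y ↔
    x ∈ Set.Icc 1 n ∧ y ∈ Set.Icc 1 n ∧ y = x + 2 := Iff.rfl

theorem dnMap_R (x y : ℕ) : (dnMap n).R x y ↔
    x ∈ Set.Icc 1 n ∧ y ∈ Set.Icc 1 n ∧ y + 2 = x := Iff.rfl

theorem vMap_R (i x y : ℕ) : (vMap n i).R x y ↔
    x ∈ Set.Icc 1 n ∧ x ≠ i ∧ y = x := Iff.rfl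

theorem uMap_R (i x y : ℕ) : (uMap n i).R x y ↔
    x ∈ Set.Icc 1 n ∧ y ∈ Set.Icc 1 n ∧ ((x ≤ i ∧ y = x + 2) ∨ (i + 4 ≤ x ∧ y = x)) := Iff.rfl

theorem wMap_R (i x y : ℕ) : (wMap n i).R x y ↔
    x ∈ Set.Icc 1 n ∧ y ∈ Set.Icc 1 n ∧ ((x ≤ i ∧ y = x) ∨ (i + 4 ≤ x ∧ y + 2 = x)) := Iff.rfl

theorem uInvMap_R (i x y : ℕ) : (uInvMap n i).R x y ↔
    x ∈ Set.Icc 1 n ∧ y ∈ Set.Icc 1 n ∧ ((x ≤ i + 2 ∧ y + 2 = x) ∨ (i + 4 ≤ x ∧ y = x)) := Iff.rfl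

theorem wInvMap_R (i x y : ℕ) : (wInvMap n i).R x y ↔
    x ∈ Set.Icc 1 n ∧ y ∈ Set.Icc 1 n ∧ ((x ≤ i ∧ y = x) ∨ (i + 2 ≤ x ∧ y = x + 2)) := Iff.rfl

end PInj

end AuxDefs
section AuxBasic

namespace PInj

variable {n : ℕ}

theorem isIOF_of_pid {f : PInj n} (h : ∀ ⦃x y⦄, f.R x y → y = x) : IsIOF f := by
  refine ⟨?_, ?_, ?_, ?_⟩
  · intro x y x' y' h1 h2 hlt
    rw [h h1, h h2]; exact hlt
  · intro x y h1; rw [h h1]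
  · intro x y x' y' h1 h2 hf; rw [h h1, h h2]; exact hf
  · intro x y x' y' h1 h2 hf; rwa [h h1, h h2] at hf

theorem isIOF_one : IsIOF (1 : PInj n) :=
  isIOF_of_pid (by rintro x y ⟨_, rfl⟩; rfl)

theorem isIOF_mul {b c : PInj n} (hb : IsIOF b) (hc : IsIOF c) : IsIOF (b * c) := by
  obtain ⟨bo, bp, bf, bf'⟩ := hb
  obtain ⟨co, cp, cf, cf'⟩ := hc
  refine ⟨?_, ?_, ?_, ?_⟩
  · rintro x y x' y' ⟨z, h1, h2⟩ ⟨z', h1', h2'⟩ hlt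
    exact co h2 h2' (bo h1 h1' hlt)
  · rintro x y ⟨z, h1, h2⟩
    rw [bp h1, cp h2]
  · rintro x y x' y' ⟨z, h1, h2⟩ ⟨z', h1', h2'⟩ hf
    exact cf h2 h2' (bf h1 h1' hf)
  · rintro x y x' y' ⟨z, h1, h2⟩ ⟨z', h1', h2'⟩ hf
    exact bf' h1 h1' (cf' h2 h2' hf)

theorem isIOF_prod : ∀ l : List (PInj n), (∀ g ∈ l, IsIOF g) → IsIOF l.prod := by
  intro l
  induction l with
  | nil => intro _; simpa using isIOF_one
  | cons g t ih =>
    intro h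
    rw [List.prod_cons]
    exact isIOF_mul (h g (by simp)) (ih fun b hb => h b (by simp [hb]))

theorem step {f : PInj n} (hf : IsIOF f) {x y y' : ℕ}
    (h1 : f.R x y) (h2 : f.R (x + 1) y') : y' = y + 1 := by
  have hlt : y < y' := hf.1 h1 h2 (by omega)
  rcases Nat.even_or_odd x with he | ho
  · have hfl : FenceLt (x + 1) x := ⟨by rw [Nat.odd_iff]; rw [Nat.even_iff] at he; omega, Or.inr rfl⟩
    have := hf.2.2.1 h2 h1 hfl
    obtain ⟨_, h | h⟩ := this <;> omega
  · have hfl : FenceLt x (x + 1) := ⟨ho, Or.inl rfl⟩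
    have := hf.2.2.1 h1 h2 hfl
    obtain ⟨_, h | h⟩ := this <;> omega

theorem step' {f : PInj n} (hf : IsIOF f) {x x' y : ℕ}
    (h1 : f.R x y) (h2 : f.R x' (y + 1)) : x' = x + 1 := by
  have hlt : x < x' := by
    rcases lt_trichotomy x x' with h | h | h
    · exact h
    · subst h; have := f.func h1 h2; omega
    · have := hf.1 h2 h1 h; omega
  rcases Nat.even_or_odd y with he | ho
  · have hfl : FenceLt (y + 1) y := ⟨by rw [Nat.odd_iff]; rw [Nat.even_iff] at he; omega, Or.inr rfl⟩
    have := hf.2.2.2 h2 h1 hfl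
    obtain ⟨_, h | h⟩ := this <;> omega
  · have hfl : FenceLt y (y + 1) := ⟨ho, Or.inl rfl⟩
    have := hf.2.2.2 h1 h2 hfl
    obtain ⟨_, h | h⟩ := this <;> omega

theorem blockrun {b c : PInj n} (hb : IsIOF b) {a e m z0 : ℕ}
    (H : ∀ k, k ≤ m → ∃ z, b.R (a + k) z ∧ c.R z (e + k)) (h0 : b.R a z0) :
    ∀ k, k ≤ m → b.R (a + k) (z0 + k) ∧ c.R (z0 + k) (e + k) := by
  intro k
  induction k with
  | zero =>
    intro hk
    obtain ⟨z, hbz, hcz⟩ := H 0 hk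
    have : z = z0 := b.func (by simpa using hbz) h0
    subst this
    simpa using ⟨hbz, hcz⟩
  | succ k ih =>
    intro hk
    obtain ⟨hbk, hck⟩ := ih (by omega)
    obtain ⟨z, hbz, hcz⟩ := H (k + 1) hk
    have hbz' : b.R ((a + k) + 1) z := by
      have : a + (k + 1) = (a + k) + 1 := by omega
      rwa [this] at hbz
    have hz : z = (z0 + k) + 1 := step hb hbk hbz'
    subst hz
    constructor
    · have : a + (k + 1) = (a + k) + 1 := by omega
      rw [this]; exact hbz'
    · have h1 : z0 + (k + 1) = (z0 + k) + 1 := by omega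
      have h2 : e + (k + 1) = (e + k) + 1 := by omega
      rw [h1, h2]
      have : e + (k + 1) = (e + k) + 1 := by omega
      rwa [this] at hcz

theorem exists_in_list {P : PInj n → Prop} (h1 : ¬ P 1)
    (hbin : ∀ b c : PInj n, IsIOF b → IsIOF c → P (b * c) → P b ∨ P c) :
    ∀ l : List (PInj n), (∀ g ∈ l, IsIOF g) → P l.prod → ∃ g ∈ l, P g := by
  intro l
  induction l with
  | nil => intro _ hP; rw [List.prod_nil] at hP; exact absurd hP h1
  | cons g t ih =>
    intro hall hP
    rw [List.prod_cons] at hP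
    rcases hbin g t.prod (hall g (by simp))
        (isIOF_prod t fun b hb => hall b (by simp [hb])) hP with h | h
    · exact ⟨g, by simp, h⟩
    · obtain ⟨g', hg', hP'⟩ := ih (fun b hb => hall b (by simp [hb])) h
      exact ⟨g', by simp [hg'], hP'⟩

end PInj

end AuxBasic
section AuxIOF

namespace PInj

variable {n : ℕ}

theorem isIOF_vMap (i : ℕ) : IsIOF (vMap n i) :=
  isIOF_of_pid (by rintro x y ⟨_, _, rfl⟩; rfl)

theorem isIOF_upMap : IsIOF (upMap n) := by
  refine ⟨?_, ?_, ?_, ?_⟩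
  · rintro x y x' y' ⟨-, -, h⟩ ⟨-, -, h'⟩ hlt; omega
  · rintro x y ⟨-, -, h⟩; omega
  · rintro x y x' y' ⟨-, -, h⟩ ⟨-, -, h'⟩ hf
    simp only [FenceLt, Nat.odd_iff] at *; omega
  · rintro x y x' y' ⟨-, -, h⟩ ⟨-, -, h'⟩ hf
    simp only [FenceLt, Nat.odd_iff] at *; omega

theorem isIOF_dnMap : IsIOF (dnMap n) := by
  refine ⟨?_, ?_, ?_, ?_⟩
  · rintro x y x' y' ⟨-, -, h⟩ ⟨-, -, h'⟩ hlt; omega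
  · rintro x y ⟨-, -, h⟩; omega
  · rintro x y x' y' ⟨-, -, h⟩ ⟨-, -, h'⟩ hf
    simp only [FenceLt, Nat.odd_iff] at *; omega
  · rintro x y x' y' ⟨-, -, h⟩ ⟨-, -, h'⟩ hf
    simp only [FenceLt, Nat.odd_iff] at *; omega

theorem isIOF_uMap (i : ℕ) : IsIOF (uMap n i) := by
  refine ⟨?_, ?_, ?_, ?_⟩
  · rintro x y x' y' ⟨-, -, h⟩ ⟨-, -, h'⟩ hlt; omega
  · rintro x y ⟨-, -, h⟩; omega
  · rintro x y x' y' ⟨-, -, h⟩ ⟨-, -, h'⟩ hf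
    simp only [FenceLt, Nat.odd_iff] at *; omega
  · rintro x y x' y' ⟨-, -, h⟩ ⟨-, -, h'⟩ hf
    simp only [FenceLt, Nat.odd_iff] at *; omega

theorem isIOF_uInvMap (i : ℕ) : IsIOF (uInvMap n i) := by
  refine ⟨?_, ?_, ?_, ?_⟩
  · rintro x y x' y' ⟨-, -, h⟩ ⟨-, -, h'⟩ hlt; omega
  · rintro x y ⟨-, -, h⟩; omega
  · rintro x y x' y' ⟨-, -, h⟩ ⟨-, -, h'⟩ hf
    simp only [FenceLt, Nat.odd_iff] at *; omega
  · rintro x y x' y' ⟨-, -, h⟩ ⟨-, -, h'⟩ hf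
    simp only [FenceLt, Nat.odd_iff] at *; omega

end PInj

end AuxIOF
section AuxEq

namespace PInj

variable {n : ℕ}

theorem eq_upMap (hn : 4 ≤ n) {f : PInj n} (hf : IsIOF f)
    (hL : ∀ x, 1 ≤ x → x + 2 ≤ n → f.R x (x + 2)) : f = upMap n := by
  ext x y
  constructor
  · intro hxy
    have hx := f.memL hxy; have hy := f.memR hxy
    rw [Set.mem_Icc] at hx hy
    refine ⟨Set.mem_Icc.mpr hx, Set.mem_Icc.mpr hy, ?_⟩
    by_cases h2 : x + 2 ≤ n
    · exact f.func hxy (hL x hx.1 h2)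
    · exfalso
      have h3 : f.R (n - 2) n := by
        have := hL (n - 2) (by omega) (by omega)
        have e : n - 2 + 2 = n := by omega
        rwa [e] at this
      have := hf.1 h3 hxy (by omega)
      omega
  · rintro ⟨hx, hy, rfl⟩
    rw [Set.mem_Icc] at hx hy
    exact hL x hx.1 (by omega)

theorem eq_dnMap (hn : 4 ≤ n) {f : PInj n} (hf : IsIOF f)
    (hL : ∀ y, 1 ≤ y → y + 2 ≤ n → f.R (y + 2) y) : f = dnMap n := by
  ext x y
  constructor
  · intro hxy
    have hx := f.memL hxy; have hy := f.memR hxy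
    rw [Set.mem_Icc] at hx hy
    refine ⟨Set.mem_Icc.mpr hx, Set.mem_Icc.mpr hy, ?_⟩
    by_cases h2 : 3 ≤ x
    · have h3 : f.R x (x - 2) := by
        have := hL (x - 2) (by omega) (by omega)
        have e : x - 2 + 2 = x := by omega
        rwa [e] at this
      have := f.func hxy h3
      omega
    · exfalso
      have h3 : f.R 3 1 := hL 1 (by omega) (by omega)
      have := hf.1 hxy h3 (by omega)
      omega
  · rintro ⟨hx, hy, h⟩
    rw [Set.mem_Icc] at hx hy
    have := hL y hy.1 (by omega)
    have e : y + 2 = x := h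
    rwa [e] at this

theorem eq_vMap {i : ℕ} (hi1 : 1 ≤ i) (hi2 : i ≤ n) {f : PInj n}
    (hL : ∀ x, 1 ≤ x → x ≤ n → x ≠ i → f.R x x) (hni : ∀ y, ¬ f.R i y) :
    f = vMap n i := by
  ext x y
  constructor
  · intro hxy
    have hx := f.memL hxy
    rw [Set.mem_Icc] at hx
    have hne : x ≠ i := by rintro rfl; exact hni y hxy
    exact ⟨Set.mem_Icc.mpr hx, hne, f.func hxy (hL x hx.1 hx.2 hne)⟩
  · rintro ⟨hx, hne, h3⟩
    rw [Set.mem_Icc] at hx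
    subst h3
    exact hL y hx.1 hx.2 hne

theorem eq_uMap (hn : 4 ≤ n) {i : ℕ} (hi1 : 1 ≤ i) (hi2 : i + 4 ≤ n) {f : PInj n}
    (hf : IsIOF f)
    (hL : ∀ x, 1 ≤ x → x ≤ i → f.R x (x + 2))
    (hH : ∀ x, i + 4 ≤ x → x ≤ n → f.R x x) : f = uMap n i := by
  have hRi : f.R i (i + 2) := hL i hi1 le_rfl
  have hRh : f.R (i + 4) (i + 4) := hH (i + 4) le_rfl hi2
  ext x y
  constructor
  · intro hxy
    have hx := f.memL hxy; have hy := f.memR hxy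
    rw [Set.mem_Icc] at hx hy
    refine ⟨Set.mem_Icc.mpr hx, Set.mem_Icc.mpr hy, ?_⟩
    by_cases hxi : x ≤ i
    · exact Or.inl ⟨hxi, f.func hxy (hL x hx.1 hxi)⟩
    by_cases hxi4 : i + 4 ≤ x
    · exact Or.inr ⟨hxi4, f.func hxy (hH x hxi4 hx.2)⟩
    exfalso
    have hcase : x = i + 1 ∨ x = i + 2 ∨ x = i + 3 := by omega
    rcases hcase with rfl | rfl | rfl
    · have hy1 : y = (i + 2) + 1 := step hf hRi hxy
      subst hy1
      have := step' hf hxy hRh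
      omega
    · have h1 : i + 2 < y := hf.1 hRi hxy (by omega)
      have h2 : y < i + 4 := hf.1 hxy hRh (by omega)
      have h3 := hf.2.1 hxy
      omega
    · have hy1 : i + 4 = y + 1 := step hf hxy hRh
      have hy2 : y = i + 3 := by omega
      subst hy2
      have := step' hf hRi hxy
      omega
  · rintro ⟨hx, hy, (⟨h1, h2⟩ | ⟨h1, h2⟩)⟩
    · rw [Set.mem_Icc] at hx; subst h2; exact hL x hx.1 h1
    · rw [Set.mem_Icc] at hx; subst h2; exact hH y h1 hx.2

theorem eq_wMap (hn : 4 ≤ n) {i : ℕ} (hi1 : 1 ≤ i) (hi2 : i + 4 ≤ n) {f : PInj n}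
    (hf : IsIOF f)
    (hL : ∀ x, 1 ≤ x → x ≤ i → f.R x x)
    (hH : ∀ y, i + 2 ≤ y → y + 2 ≤ n → f.R (y + 2) y) : f = wMap n i := by
  have hRi : f.R i i := hL i hi1 le_rfl
  have hRh : f.R (i + 4) (i + 2) := hH (i + 2) le_rfl (by omega)
  ext x y
  constructor
  · intro hxy
    have hx := f.memL hxy; have hy := f.memR hxy
    rw [Set.mem_Icc] at hx hy
    refine ⟨Set.mem_Icc.mpr hx, Set.mem_Icc.mpr hy, ?_⟩
    by_cases hxi : x ≤ i
    · exact Or.inl ⟨hxi, f.func hxy (hL x hx.1 hxi)⟩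
    by_cases hxi4 : i + 4 ≤ x
    · refine Or.inr ⟨hxi4, ?_⟩
      have h3 : f.R x (x - 2) := by
        have := hH (x - 2) (by omega) (by omega)
        have e : x - 2 + 2 = x := by omega
        rwa [e] at this
      have := f.func hxy h3
      omega
    exfalso
    have hcase : x = i + 1 ∨ x = i + 2 ∨ x = i + 3 := by omega
    rcases hcase with rfl | rfl | rfl
    · have hy1 : y = i + 1 := step hf hRi hxy
      subst hy1
      have := step' hf hxy hRh
      omega
    · have h1 : i < y := hf.1 hRi hxy (by omega)
      have h2 : y < i + 2 := hf.1 hxy hRh (by omega)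
      have h3 := hf.2.1 hxy
      omega
    · have hy1 : i + 2 = y + 1 := step hf hxy hRh
      have hy2 : y = i + 1 := by omega
      subst hy2
      have := step' hf hRi hxy
      omega
  · rintro ⟨hx, hy, (⟨h1, h2⟩ | ⟨h1, h2⟩)⟩
    · rw [Set.mem_Icc] at hx; subst h2; exact hL y hx.1 h1
    · rw [Set.mem_Icc] at hx hy
      have := hH y (by omega) (by omega)
      rwa [h2] at this

theorem eq_uInvMap (hn : 4 ≤ n) {i : ℕ} (hi1 : 1 ≤ i) (hi2 : i + 4 ≤ n) {f : PInj n}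
    (hf : IsIOF f)
    (hL : ∀ y, 1 ≤ y → y ≤ i → f.R (y + 2) y)
    (hH : ∀ x, i + 4 ≤ x → x ≤ n → f.R x x) : f = uInvMap n i := by
  have hRi : f.R (i + 2) i := hL i hi1 le_rfl
  have hRh : f.R (i + 4) (i + 4) := hH (i + 4) le_rfl hi2
  have hR31 : f.R 3 1 := hL 1 le_rfl hi1
  ext x y
  constructor
  · intro hxy
    have hx := f.memL hxy; have hy := f.memR hxy
    rw [Set.mem_Icc] at hx hy
    refine ⟨Set.mem_Icc.mpr hx, Set.mem_Icc.mpr hy, ?_⟩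
    by_cases hx2 : x ≤ 2
    · exfalso
      have := hf.1 hxy hR31 (by omega)
      omega
    by_cases hxi : x ≤ i + 2
    · refine Or.inl ⟨hxi, ?_⟩
      have h3 : f.R x (x - 2) := by
        have := hL (x - 2) (by omega) (by omega)
        have e : x - 2 + 2 = x := by omega
        rwa [e] at this
      have := f.func hxy h3
      omega
    by_cases hxi4 : i + 4 ≤ x
    · exact Or.inr ⟨hxi4, f.func hxy (hH x hxi4 hx.2)⟩
    exfalso
    have hcase : x = i + 3 := by omega
    subst hcase
    have hy1 : y = i + 1 := step hf hRi hxy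
    subst hy1
    have hRh' : f.R (i + 3 + 1) (i + 4) := by
      rwa [show i + 3 + 1 = i + 4 from by omega]
    have := step hf hxy hRh'
    omega
  · rintro ⟨hx, hy, (⟨h1, h2⟩ | ⟨h1, h2⟩)⟩
    · rw [Set.mem_Icc] at hx hy
      have := hL y hy.1 (by omega)
      rwa [h2] at this
    · rw [Set.mem_Icc] at hx; subst h2; exact hH y h1 hx.2

theorem eq_wInvMap (hn : 4 ≤ n) {i : ℕ} (hi1 : 1 ≤ i) (hi2 : i + 4 ≤ n) {f : PInj n}
    (hf : IsIOF f)
    (hL : ∀ x, 1 ≤ x → x ≤ i → f.R x x)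
    (hH : ∀ x, i + 2 ≤ x → x + 2 ≤ n → f.R x (x + 2)) : f = wInvMap n i := by
  have hRi : f.R i i := hL i hi1 le_rfl
  have hRh : f.R (i + 2) (i + 4) := hH (i + 2) le_rfl hi2
  ext x y
  constructor
  · intro hxy
    have hx := f.memL hxy; have hy := f.memR hxy
    rw [Set.mem_Icc] at hx hy
    refine ⟨Set.mem_Icc.mpr hx, Set.mem_Icc.mpr hy, ?_⟩
    by_cases hxi : x ≤ i
    · exact Or.inl ⟨hxi, f.func hxy (hL x hx.1 hxi)⟩
    by_cases hxn : x + 2 ≤ n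
    · by_cases hxi2 : i + 2 ≤ x
      · exact Or.inr ⟨hxi2, f.func hxy (hH x hxi2 hxn)⟩
      exfalso
      have hcase : x = i + 1 := by omega
      subst hcase
      have hy1 : y = i + 1 := step hf hRi hxy
      subst hy1
      have hRh' : f.R (i + 1 + 1) (i + 4) := by
        rwa [show i + 1 + 1 = i + 2 from by omega]
      have := step hf hxy hRh'
      omega
    · exfalso
      have h3 : f.R (n - 2) n := by
        have := hH (n - 2) (by omega) (by omega)
        have e : n - 2 + 2 = n := by omega
        rwa [e] at this
      have := hf.1 h3 hxy (by omega)
      omega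
  · rintro ⟨hx, hy, (⟨h1, h2⟩ | ⟨h1, h2⟩)⟩
    · rw [Set.mem_Icc] at hx; subst h2; exact hL y hx.1 h1
    · rw [Set.mem_Icc] at hy; subst h2; exact hH x h1 (by omega)

end PInj

end AuxEq
section AuxPrime1

namespace PInj

variable {n : ℕ}

theorem prime_upMap (hn : 4 ≤ n) {b c : PInj n} (hb : IsIOF b) (hc : IsIOF c)
    (h : b * c = upMap n) : b = upMap n ∨ c = upMap n := by
  have hA : ∀ x y, (upMap n).R x y → ∃ z, b.R x z ∧ c.R z y := by
    intro x y hxy; rw [← h] at hxy; exact hxy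
  have H : ∀ k, k ≤ n - 3 → ∃ z, b.R (1 + k) z ∧ c.R z (3 + k) := by
    intro k hk
    exact hA (1 + k) (3 + k)
      ⟨Set.mem_Icc.mpr ⟨by omega, by omega⟩, Set.mem_Icc.mpr ⟨by omega, by omega⟩, by omega⟩
  obtain ⟨z1, hbz, hcz⟩ := H 0 (by omega)
  have hbz1 : b.R 1 z1 := by simpa using hbz
  have run := blockrun hb H hbz1
  have hpar : 1 % 2 = z1 % 2 := hb.2.1 hbz1
  have hmem := b.memR hbz1
  rw [Set.mem_Icc] at hmem
  have htop := (run (n - 3) le_rfl).1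
  have htopmem := b.memR htop
  rw [Set.mem_Icc] at htopmem
  have hz1 : z1 = 1 ∨ z1 = 3 := by omega
  rcases hz1 with rfl | rfl
  · right
    refine eq_upMap hn hc ?_
    intro x h1 h2
    have hr := (run (x - 1) (by omega)).2
    rw [show 1 + (x - 1) = x from by omega, show 3 + (x - 1) = x + 2 from by omega] at hr
    exact hr
  · left
    refine eq_upMap hn hb ?_
    intro x h1 h2
    have hr := (run (x - 1) (by omega)).1
    rw [show 1 + (x - 1) = x from by omega, show 3 + (x - 1) = x + 2 from by omega] at hr
    exact hr

theorem prime_dnMap (hn : 4 ≤ n) {b c : PInj n} (hb : IsIOF b) (hc : IsIOF c)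
    (h : b * c = dnMap n) : b = dnMap n ∨ c = dnMap n := by
  have hA : ∀ x y, (dnMap n).R x y → ∃ z, b.R x z ∧ c.R z y := by
    intro x y hxy; rw [← h] at hxy; exact hxy
  have H : ∀ k, k ≤ n - 3 → ∃ z, b.R (3 + k) z ∧ c.R z (1 + k) := by
    intro k hk
    exact hA (3 + k) (1 + k)
      ⟨Set.mem_Icc.mpr ⟨by omega, by omega⟩, Set.mem_Icc.mpr ⟨by omega, by omega⟩, by omega⟩
  obtain ⟨z1, hbz, hcz⟩ := H 0 (by omega)
  have hbz1 : b.R 3 z1 := by simpa using hbz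
  have run := blockrun hb H hbz1
  have hpar : 3 % 2 = z1 % 2 := hb.2.1 hbz1
  have hmem := b.memR hbz1
  rw [Set.mem_Icc] at hmem
  have htop := (run (n - 3) le_rfl).1
  have htopmem := b.memR htop
  rw [Set.mem_Icc] at htopmem
  have hz1 : z1 = 1 ∨ z1 = 3 := by omega
  rcases hz1 with rfl | rfl
  · left
    refine eq_dnMap hn hb ?_
    intro y h1 h2
    have hr := (run (y - 1) (by omega)).1
    rw [show 3 + (y - 1) = y + 2 from by omega, show 1 + (y - 1) = y from by omega] at hr
    exact hr
  · right
    refine eq_dnMap hn hc ?_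
    intro y h1 h2
    have hr := (run (y - 1) (by omega)).2
    rw [show 3 + (y - 1) = y + 2 from by omega, show 1 + (y - 1) = y from by omega] at hr
    exact hr

theorem prime_vMap (hn : 4 ≤ n) {i : ℕ} (hi1 : 1 ≤ i) (hi2 : i ≤ n) {b c : PInj n}
    (hb : IsIOF b) (hc : IsIOF c)
    (h : b * c = vMap n i) : b = vMap n i ∨ c = vMap n i := by
  have hiff : ∀ x y, (∃ z, b.R x z ∧ c.R z y) ↔ (vMap n i).R x y := by
    intro x y; rw [← h]; exact Iff.rfl
  have hA : ∀ x y, (vMap n i).R x y → ∃ z, b.R x z ∧ c.R z y := fun x y hxy =>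
    (hiff x y).mpr hxy
  -- low block (when 2 ≤ i)
  have hlowblock : 2 ≤ i → ∀ x, 1 ≤ x → x < i → (b.R x x ∧ c.R x x) := by
    intro h2i
    have H : ∀ k, k ≤ i - 2 → ∃ z, b.R (1 + k) z ∧ c.R z (1 + k) := by
      intro k hk
      exact hA (1 + k) (1 + k)
        ⟨Set.mem_Icc.mpr ⟨by omega, by omega⟩, by omega, rfl⟩
    obtain ⟨z1, hbz, hcz⟩ := H 0 (by omega)
    have hbz1 : b.R 1 z1 := by simpa using hbz
    have run := blockrun hb H hbz1
    have hpar : 1 % 2 = z1 % 2 := hb.2.1 hbz1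
    have hmem := b.memR hbz1
    rw [Set.mem_Icc] at hmem
    -- bound z1: low block runs to i-1; need also the top side or edge i = n
    have hz1 : z1 = 1 := by
      by_cases hin : i ≤ n - 1
      · -- use high block start to bound
        obtain ⟨z2, hbz2, hcz2⟩ := hA (i + 1) (i + 1)
          ⟨Set.mem_Icc.mpr ⟨by omega, by omega⟩, by omega, rfl⟩
        have htop := (run (i - 2) le_rfl).1
        have horder : z1 + (i - 2) < z2 := by
          refine hb.1 htop hbz2 ?_
          omega
        -- also bound z2 from the top of the high block
        have H2 : ∀ k, k ≤ n - i - 1 → ∃ z, b.R (i + 1 + k) z ∧ c.R z (i + 1 + k) := by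
          intro k hk
          exact hA (i + 1 + k) (i + 1 + k)
            ⟨Set.mem_Icc.mpr ⟨by omega, by omega⟩, by omega, rfl⟩
        have run2 := blockrun hb H2 hbz2
        have htop2 := (run2 (n - i - 1) le_rfl).1
        have htopmem := b.memR htop2
        rw [Set.mem_Icc] at htopmem
        omega
      · -- i = n
        have htop := (run (i - 2) le_rfl).1
        have htopmem := b.memR htop
        rw [Set.mem_Icc] at htopmem
        omega
    subst hz1
    intro x h1 h2
    have hr := run (x - 1) (by omega)
    rw [show 1 + (x - 1) = x from by omega] at hr
    exact hr
  -- high block (when i ≤ n - 1)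
  have hhighblock : i ≤ n - 1 → ∀ x, i < x → x ≤ n → (b.R x x ∧ c.R x x) := by
    intro hin
    have H : ∀ k, k ≤ n - i - 1 → ∃ z, b.R (i + 1 + k) z ∧ c.R z (i + 1 + k) := by
      intro k hk
      exact hA (i + 1 + k) (i + 1 + k)
        ⟨Set.mem_Icc.mpr ⟨by omega, by omega⟩, by omega, rfl⟩
    obtain ⟨z2, hbz, hcz⟩ := H 0 (by omega)
    have hbz2 : b.R (i + 1) z2 := by simpa using hbz
    have run := blockrun hb H hbz2
    have hpar : (i + 1) % 2 = z2 % 2 := hb.2.1 hbz2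
    have hmem := b.memR hbz2
    rw [Set.mem_Icc] at hmem
    have htop := (run (n - i - 1) le_rfl).1
    have htopmem := b.memR htop
    rw [Set.mem_Icc] at htopmem
    have hz2 : z2 = i + 1 := by
      by_cases h2i : 2 ≤ i
      · obtain ⟨z1, hbz1', hcz1'⟩ := hA 1 1
          ⟨Set.mem_Icc.mpr ⟨by omega, by omega⟩, by omega, rfl⟩
        have H1 : ∀ k, k ≤ i - 2 → ∃ z, b.R (1 + k) z ∧ c.R z (1 + k) := by
          intro k hk
          exact hA (1 + k) (1 + k)
            ⟨Set.mem_Icc.mpr ⟨by omega, by omega⟩, by omega, rfl⟩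
        have run1 := blockrun hb H1 hbz1'
        have htop1 := (run1 (i - 2) le_rfl).1
        have hmem1 := b.memR hbz1'
        rw [Set.mem_Icc] at hmem1
        have horder : z1 + (i - 2) < z2 := by
          refine hb.1 htop1 hbz2 ?_
          omega
        omega
      · -- i = 1 : z2 even, 1 ≤ z2 ≤ i + 1 = 2
        have h1 : 1 ≤ z2 := hmem.1
        omega
    subst hz2
    intro x h1 h2
    have hr := run (x - i - 1) (by omega)
    rw [show i + 1 + (x - i - 1) = x from by omega] at hr
    exact hr
  have hid : ∀ x, 1 ≤ x → x ≤ n → x ≠ i → (b.R x x ∧ c.R x x) := by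
    intro x h1 h2 h3
    rcases lt_or_gt_of_ne h3 with hlt | hgt
    · exact hlowblock (by omega) x h1 hlt
    · exact hhighblock (by omega) x hgt h2
  by_cases hbi : ∃ q, b.R i q
  · obtain ⟨q, hq⟩ := hbi
    have hqmem := b.memR hq
    rw [Set.mem_Icc] at hqmem
    have h1' : i = 1 ∨ i - 1 < q := by
      by_cases h2i : 2 ≤ i
      · exact Or.inr (hb.1 (hid (i - 1) (by omega) (by omega) (by omega)).1 hq (by omega))
      · exact Or.inl (by omega)
    have h2' : i = n ∨ q < i + 1 := by
      by_cases hin : i ≤ n - 1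
      · exact Or.inr (hb.1 hq (hid (i + 1) (by omega) (by omega) (by omega)).1 (by omega))
      · exact Or.inl (by omega)
    have hqi : q = i := by omega
    rw [hqi] at hq
    by_cases hci : ∃ q', c.R i q'
    · exfalso
      obtain ⟨q', hq'⟩ := hci
      have hq'mem := c.memR hq'
      rw [Set.mem_Icc] at hq'mem
      have h1'' : i = 1 ∨ i - 1 < q' := by
        by_cases h2i : 2 ≤ i
        · exact Or.inr (hc.1 (hid (i - 1) (by omega) (by omega) (by omega)).2 hq' (by omega))
        · exact Or.inl (by omega)
      have h2'' : i = n ∨ q' < i + 1 := by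
        by_cases hin : i ≤ n - 1
        · exact Or.inr (hc.1 hq' (hid (i + 1) (by omega) (by omega) (by omega)).2 (by omega))
        · exact Or.inl (by omega)
      have hq'i : q' = i := by omega
      rw [hq'i] at hq'
      have : (vMap n i).R i i := (hiff i i).mp ⟨i, hq, hq'⟩
      obtain ⟨-, hne, -⟩ := this
      exact hne rfl
    · right
      exact eq_vMap hi1 hi2 (fun x a1 a2 a3 => (hid x a1 a2 a3).2)
        (fun y hy => hci ⟨y, hy⟩)
  · left
    exact eq_vMap hi1 hi2 (fun x a1 a2 a3 => (hid x a1 a2 a3).1)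
      (fun y hy => hbi ⟨y, hy⟩)

end PInj

end AuxPrime1
section AuxPrime2

namespace PInj

variable {n : ℕ}

theorem prime_uMap (hn : 4 ≤ n) {i : ℕ} (hi1 : 1 ≤ i) (hi2 : i + 4 ≤ n) {b c : PInj n}
    (hb : IsIOF b) (hc : IsIOF c) (h : b * c = uMap n i) :
    (b = uMap n i ∨ b = wMap n i) ∨ (c = uMap n i ∨ c = wMap n i) := by
  have hA : ∀ x y, (uMap n i).R x y → ∃ z, b.R x z ∧ c.R z y := by
    intro x y hxy; rw [← h] at hxy; exact hxy
  have H1 : ∀ k, k ≤ i - 1 → ∃ z, b.R (1 + k) z ∧ c.R z (3 + k) := by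
    intro k hk
    exact hA (1 + k) (3 + k)
      ⟨Set.mem_Icc.mpr ⟨by omega, by omega⟩, Set.mem_Icc.mpr ⟨by omega, by omega⟩,
        Or.inl ⟨by omega, by omega⟩⟩
  have H2 : ∀ k, k ≤ n - i - 4 → ∃ z, b.R (i + 4 + k) z ∧ c.R z (i + 4 + k) := by
    intro k hk
    exact hA (i + 4 + k) (i + 4 + k)
      ⟨Set.mem_Icc.mpr ⟨by omega, by omega⟩, Set.mem_Icc.mpr ⟨by omega, by omega⟩,
        Or.inr ⟨by omega, rfl⟩⟩
  obtain ⟨z1, hbz, hcz⟩ := H1 0 (by omega)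
  have hbz1 : b.R 1 z1 := by simpa using hbz
  obtain ⟨z2, hbz2', hcz2'⟩ := H2 0 (by omega)
  have hbz2 : b.R (i + 4) z2 := by simpa using hbz2'
  have run1 := blockrun hb H1 hbz1
  have run2 := blockrun hb H2 hbz2
  have hpar1 : 1 % 2 = z1 % 2 := hb.2.1 hbz1
  have hpar2 : (i + 4) % 2 = z2 % 2 := hb.2.1 hbz2
  have hmem1 := b.memR hbz1
  rw [Set.mem_Icc] at hmem1
  have htop := (run2 (n - i - 4) le_rfl).1
  have htopmem := b.memR htop
  rw [Set.mem_Icc] at htopmem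
  have hord : z1 + (i - 1) < z2 := by
    have ht1 := (run1 (i - 1) le_rfl).1
    exact hb.1 ht1 hbz2 (by omega)
  have hcases : (z1 = 1 ∧ z2 = i + 4) ∨ (z1 = 1 ∧ z2 = i + 2) ∨ (z1 = 3 ∧ z2 = i + 4) := by
    omega
  rcases hcases with ⟨e1, e2⟩ | ⟨e1, e2⟩ | ⟨e1, e2⟩ <;> subst e1 <;> subst e2
  · -- b identity on both blocks; c = uMap
    right; left
    refine eq_uMap hn hi1 hi2 hc ?_ ?_
    · intro x h1 h2
      have hr := (run1 (x - 1) (by omega)).2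
      rw [show 1 + (x - 1) = x from by omega, show 3 + (x - 1) = x + 2 from by omega] at hr
      exact hr
    · intro x h1 h2
      have hr := (run2 (x - i - 4) (by omega)).2
      rw [show i + 4 + (x - i - 4) = x from by omega] at hr
      exact hr
  · -- b = wMap
    left; right
    refine eq_wMap hn hi1 hi2 hb ?_ ?_
    · intro x h1 h2
      have hr := (run1 (x - 1) (by omega)).1
      rw [show 1 + (x - 1) = x from by omega] at hr
      exact hr
    · intro y h1 h2
      have hr := (run2 (y - i - 2) (by omega)).1
      rw [show i + 4 + (y - i - 2) = y + 2 from by omega,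
        show i + 2 + (y - i - 2) = y from by omega] at hr
      exact hr
  · -- b = uMap
    left; left
    refine eq_uMap hn hi1 hi2 hb ?_ ?_
    · intro x h1 h2
      have hr := (run1 (x - 1) (by omega)).1
      rw [show 1 + (x - 1) = x from by omega, show 3 + (x - 1) = x + 2 from by omega] at hr
      exact hr
    · intro x h1 h2
      have hr := (run2 (x - i - 4) (by omega)).1
      rw [show i + 4 + (x - i - 4) = x from by omega] at hr
      exact hr

theorem prime_wMap (hn : 4 ≤ n) {i : ℕ} (hi1 : 1 ≤ i) (hi2 : i + 4 ≤ n) {b c : PInj n}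
    (hb : IsIOF b) (hc : IsIOF c) (h : b * c = wMap n i) :
    (b = uMap n i ∨ b = wMap n i) ∨ (c = uMap n i ∨ c = wMap n i) := by
  have hA : ∀ x y, (wMap n i).R x y → ∃ z, b.R x z ∧ c.R z y := by
    intro x y hxy; rw [← h] at hxy; exact hxy
  have H1 : ∀ k, k ≤ i - 1 → ∃ z, b.R (1 + k) z ∧ c.R z (1 + k) := by
    intro k hk
    exact hA (1 + k) (1 + k)
      ⟨Set.mem_Icc.mpr ⟨by omega, by omega⟩, Set.mem_Icc.mpr ⟨by omega, by omega⟩,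
        Or.inl ⟨by omega, rfl⟩⟩
  have H2 : ∀ k, k ≤ n - i - 4 → ∃ z, b.R (i + 4 + k) z ∧ c.R z (i + 2 + k) := by
    intro k hk
    exact hA (i + 4 + k) (i + 2 + k)
      ⟨Set.mem_Icc.mpr ⟨by omega, by omega⟩, Set.mem_Icc.mpr ⟨by omega, by omega⟩,
        Or.inr ⟨by omega, by omega⟩⟩
  obtain ⟨z1, hbz, hcz⟩ := H1 0 (by omega)
  have hbz1 : b.R 1 z1 := by simpa using hbz
  obtain ⟨z2, hbz2', hcz2'⟩ := H2 0 (by omega)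
  have hbz2 : b.R (i + 4) z2 := by simpa using hbz2'
  have run1 := blockrun hb H1 hbz1
  have run2 := blockrun hb H2 hbz2
  have hpar1 : 1 % 2 = z1 % 2 := hb.2.1 hbz1
  have hpar2 : (i + 4) % 2 = z2 % 2 := hb.2.1 hbz2
  have hmem1 := b.memR hbz1
  rw [Set.mem_Icc] at hmem1
  have htop := (run2 (n - i - 4) le_rfl).1
  have htopmem := b.memR htop
  rw [Set.mem_Icc] at htopmem
  have hord : z1 + (i - 1) < z2 := by
    have ht1 := (run1 (i - 1) le_rfl).1
    exact hb.1 ht1 hbz2 (by omega)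
  have hcases : (z1 = 1 ∧ z2 = i + 4) ∨ (z1 = 1 ∧ z2 = i + 2) ∨ (z1 = 3 ∧ z2 = i + 4) := by
    omega
  rcases hcases with ⟨e1, e2⟩ | ⟨e1, e2⟩ | ⟨e1, e2⟩ <;> subst e1 <;> subst e2
  · -- b identity on both blocks; c = wMap
    right; right
    refine eq_wMap hn hi1 hi2 hc ?_ ?_
    · intro x h1 h2
      have hr := (run1 (x - 1) (by omega)).2
      rw [show 1 + (x - 1) = x from by omega] at hr
      exact hr
    · intro y h1 h2
      have hr := (run2 (y - i - 2) (by omega)).2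
      rw [show i + 4 + (y - i - 2) = y + 2 from by omega,
        show i + 2 + (y - i - 2) = y from by omega] at hr
      exact hr
  · -- b = wMap
    left; right
    refine eq_wMap hn hi1 hi2 hb ?_ ?_
    · intro x h1 h2
      have hr := (run1 (x - 1) (by omega)).1
      rw [show 1 + (x - 1) = x from by omega] at hr
      exact hr
    · intro y h1 h2
      have hr := (run2 (y - i - 2) (by omega)).1
      rw [show i + 4 + (y - i - 2) = y + 2 from by omega,
        show i + 2 + (y - i - 2) = y from by omega] at hr
      exact hr
  · -- b = uMap
    left; left
    refine eq_uMap hn hi1 hi2 hb ?_ ?_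
    · intro x h1 h2
      have hr := (run1 (x - 1) (by omega)).1
      rw [show 1 + (x - 1) = x from by omega, show 3 + (x - 1) = x + 2 from by omega] at hr
      exact hr
    · intro x h1 h2
      have hr := (run2 (x - i - 4) (by omega)).1
      rw [show i + 4 + (x - i - 4) = x from by omega] at hr
      exact hr

theorem prime_uInvMap (hn : 4 ≤ n) {i : ℕ} (hi1 : 1 ≤ i) (hi2 : i + 4 ≤ n) {b c : PInj n}
    (hb : IsIOF b) (hc : IsIOF c) (h : b * c = uInvMap n i) :
    (b = uInvMap n i ∨ b = wInvMap n i) ∨ (c = uInvMap n i ∨ c = wInvMap n i) := by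
  have hA : ∀ x y, (uInvMap n i).R x y → ∃ z, b.R x z ∧ c.R z y := by
    intro x y hxy; rw [← h] at hxy; exact hxy
  have H1 : ∀ k, k ≤ i - 1 → ∃ z, b.R (3 + k) z ∧ c.R z (1 + k) := by
    intro k hk
    exact hA (3 + k) (1 + k)
      ⟨Set.mem_Icc.mpr ⟨by omega, by omega⟩, Set.mem_Icc.mpr ⟨by omega, by omega⟩,
        Or.inl ⟨by omega, by omega⟩⟩
  have H2 : ∀ k, k ≤ n - i - 4 → ∃ z, b.R (i + 4 + k) z ∧ c.R z (i + 4 + k) := by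
    intro k hk
    exact hA (i + 4 + k) (i + 4 + k)
      ⟨Set.mem_Icc.mpr ⟨by omega, by omega⟩, Set.mem_Icc.mpr ⟨by omega, by omega⟩,
        Or.inr ⟨by omega, rfl⟩⟩
  obtain ⟨z1, hbz, hcz⟩ := H1 0 (by omega)
  have hbz1 : b.R 3 z1 := by simpa using hbz
  obtain ⟨z2, hbz2', hcz2'⟩ := H2 0 (by omega)
  have hbz2 : b.R (i + 4) z2 := by simpa using hbz2'
  have run1 := blockrun hb H1 hbz1
  have run2 := blockrun hb H2 hbz2
  have hpar1 : 3 % 2 = z1 % 2 := hb.2.1 hbz1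
  have hpar2 : (i + 4) % 2 = z2 % 2 := hb.2.1 hbz2
  have hmem1 := b.memR hbz1
  rw [Set.mem_Icc] at hmem1
  have htop := (run2 (n - i - 4) le_rfl).1
  have htopmem := b.memR htop
  rw [Set.mem_Icc] at htopmem
  have hord : z1 + (i - 1) < z2 := by
    have ht1 := (run1 (i - 1) le_rfl).1
    exact hb.1 ht1 hbz2 (by omega)
  have hcases : (z1 = 3 ∧ z2 = i + 4) ∨ (z1 = 1 ∧ z2 = i + 2) ∨ (z1 = 1 ∧ z2 = i + 4) := by
    omega
  rcases hcases with ⟨e1, e2⟩ | ⟨e1, e2⟩ | ⟨e1, e2⟩ <;> subst e1 <;> subst e2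
  · -- b identity on blocks; c = uInvMap
    right; left
    refine eq_uInvMap hn hi1 hi2 hc ?_ ?_
    · intro y h1 h2
      have hr := (run1 (y - 1) (by omega)).2
      rw [show 3 + (y - 1) = y + 2 from by omega, show 1 + (y - 1) = y from by omega] at hr
      exact hr
    · intro x h1 h2
      have hr := (run2 (x - i - 4) (by omega)).2
      rw [show i + 4 + (x - i - 4) = x from by omega] at hr
      exact hr
  · -- b shifts -2 on both blocks; c = wInvMap
    right; right
    refine eq_wInvMap hn hi1 hi2 hc ?_ ?_
    · intro x h1 h2
      have hr := (run1 (x - 1) (by omega)).2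
      rw [show 1 + (x - 1) = x from by omega] at hr
      exact hr
    · intro x h1 h2
      have hr := (run2 (x - i - 2) (by omega)).2
      rw [show i + 2 + (x - i - 2) = x from by omega,
        show i + 4 + (x - i - 2) = x + 2 from by omega] at hr
      exact hr
  · -- b = uInvMap
    left; left
    refine eq_uInvMap hn hi1 hi2 hb ?_ ?_
    · intro y h1 h2
      have hr := (run1 (y - 1) (by omega)).1
      rw [show 3 + (y - 1) = y + 2 from by omega, show 1 + (y - 1) = y from by omega] at hr
      exact hr
    · intro x h1 h2
      have hr := (run2 (x - i - 4) (by omega)).1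
      rw [show i + 4 + (x - i - 4) = x from by omega] at hr
      exact hr

theorem prime_wInvMap (hn : 4 ≤ n) {i : ℕ} (hi1 : 1 ≤ i) (hi2 : i + 4 ≤ n) {b c : PInj n}
    (hb : IsIOF b) (hc : IsIOF c) (h : b * c = wInvMap n i) :
    (b = uInvMap n i ∨ b = wInvMap n i) ∨ (c = uInvMap n i ∨ c = wInvMap n i) := by
  have hA : ∀ x y, (wInvMap n i).R x y → ∃ z, b.R x z ∧ c.R z y := by
    intro x y hxy; rw [← h] at hxy; exact hxy
  have H1 : ∀ k, k ≤ i - 1 → ∃ z, b.R (1 + k) z ∧ c.R z (1 + k) := by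
    intro k hk
    exact hA (1 + k) (1 + k)
      ⟨Set.mem_Icc.mpr ⟨by omega, by omega⟩, Set.mem_Icc.mpr ⟨by omega, by omega⟩,
        Or.inl ⟨by omega, rfl⟩⟩
  have H2 : ∀ k, k ≤ n - i - 4 → ∃ z, b.R (i + 2 + k) z ∧ c.R z (i + 4 + k) := by
    intro k hk
    exact hA (i + 2 + k) (i + 4 + k)
      ⟨Set.mem_Icc.mpr ⟨by omega, by omega⟩, Set.mem_Icc.mpr ⟨by omega, by omega⟩,
        Or.inr ⟨by omega, by omega⟩⟩
  obtain ⟨z1, hbz, hcz⟩ := H1 0 (by omega)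
  have hbz1 : b.R 1 z1 := by simpa using hbz
  obtain ⟨z2, hbz2', hcz2'⟩ := H2 0 (by omega)
  have hbz2 : b.R (i + 2) z2 := by simpa using hbz2'
  have run1 := blockrun hb H1 hbz1
  have run2 := blockrun hb H2 hbz2
  have hpar1 : 1 % 2 = z1 % 2 := hb.2.1 hbz1
  have hpar2 : (i + 2) % 2 = z2 % 2 := hb.2.1 hbz2
  have hmem1 := b.memR hbz1
  rw [Set.mem_Icc] at hmem1
  have htop := (run2 (n - i - 4) le_rfl).1
  have htopmem := b.memR htop
  rw [Set.mem_Icc] at htopmem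
  have hord : z1 + (i - 1) < z2 := by
    have ht1 := (run1 (i - 1) le_rfl).1
    exact hb.1 ht1 hbz2 (by omega)
  have hcases : (z1 = 1 ∧ z2 = i + 2) ∨ (z1 = 1 ∧ z2 = i + 4) ∨ (z1 = 3 ∧ z2 = i + 4) := by
    omega
  rcases hcases with ⟨e1, e2⟩ | ⟨e1, e2⟩ | ⟨e1, e2⟩ <;> subst e1 <;> subst e2
  · -- b identity on blocks; c = wInvMap
    right; right
    refine eq_wInvMap hn hi1 hi2 hc ?_ ?_
    · intro x h1 h2
      have hr := (run1 (x - 1) (by omega)).2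
      rw [show 1 + (x - 1) = x from by omega] at hr
      exact hr
    · intro x h1 h2
      have hr := (run2 (x - i - 2) (by omega)).2
      rw [show i + 2 + (x - i - 2) = x from by omega,
        show i + 4 + (x - i - 2) = x + 2 from by omega] at hr
      exact hr
  · -- b = wInvMap
    left; right
    refine eq_wInvMap hn hi1 hi2 hb ?_ ?_
    · intro x h1 h2
      have hr := (run1 (x - 1) (by omega)).1
      rw [show 1 + (x - 1) = x from by omega] at hr
      exact hr
    · intro x h1 h2
      have hr := (run2 (x - i - 2) (by omega)).1
      rw [show i + 2 + (x - i - 2) = x from by omega,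
        show i + 4 + (x - i - 2) = x + 2 from by omega] at hr
      exact hr
  · -- b shifts +2 on both blocks; c = uInvMap
    right; left
    refine eq_uInvMap hn hi1 hi2 hc ?_ ?_
    · intro y h1 h2
      have hr := (run1 (y - 1) (by omega)).2
      rw [show 3 + (y - 1) = y + 2 from by omega, show 1 + (y - 1) = y from by omega] at hr
      exact hr
    · intro x h1 h2
      have hr := (run2 (x - i - 4) (by omega)).2
      rw [show i + 4 + (x - i - 4) = x from by omega] at hr
      exact hr

end PInj

end AuxPrime2
section AuxNe

namespace PInj

variable {n : ℕ}

theorem one_ne_vMap {i : ℕ} (hi1 : 1 ≤ i) (hi2 : i ≤ n) (h : (1 : PInj n) = vMap n i) :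
    False := by
  have f : (1 : PInj n).R i i := ⟨Set.mem_Icc.mpr ⟨hi1, hi2⟩, rfl⟩
  rw [h] at f
  exact f.2.1 rfl

theorem one_ne_upMap (hn : 4 ≤ n) (h : (1 : PInj n) = upMap n) : False := by
  have f : (1 : PInj n).R 1 1 := ⟨Set.mem_Icc.mpr ⟨by omega, by omega⟩, rfl⟩
  rw [h] at f
  obtain ⟨-, -, hf⟩ := f
  omega

theorem one_ne_dnMap (hn : 4 ≤ n) (h : (1 : PInj n) = dnMap n) : False := by
  have f : (1 : PInj n).R 1 1 := ⟨Set.mem_Icc.mpr ⟨by omega, by omega⟩, rfl⟩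
  rw [h] at f
  obtain ⟨-, -, hf⟩ := f
  omega

theorem one_ne_uMap {i : ℕ} (hn : 4 ≤ n) (hi1 : 1 ≤ i) (h : (1 : PInj n) = uMap n i) :
    False := by
  have f : (1 : PInj n).R 1 1 := ⟨Set.mem_Icc.mpr ⟨by omega, by omega⟩, rfl⟩
  rw [h] at f
  obtain ⟨-, -, hf⟩ := f
  omega

theorem one_ne_uInvMap {i : ℕ} (hn : 4 ≤ n) (hi1 : 1 ≤ i) (h : (1 : PInj n) = uInvMap n i) :
    False := by
  have f : (1 : PInj n).R 3 3 := ⟨Set.mem_Icc.mpr ⟨by omega, by omega⟩, rfl⟩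
  rw [h] at f
  obtain ⟨-, -, hf⟩ := f
  omega

theorem vMap_inj {i j : ℕ} (hi1 : 1 ≤ i) (hi2 : i ≤ n) (hj1 : 1 ≤ j) (hj2 : j ≤ n)
    (h : vMap n i = vMap n j) : i = j := by
  by_contra hne
  have f : (vMap n i).R j j := ⟨Set.mem_Icc.mpr ⟨hj1, hj2⟩, fun hc => hne (hc ▸ rfl), rfl⟩
  rw [h] at f
  exact f.2.1 rfl

theorem vMap_ne_upMap {j : ℕ} (hn : 4 ≤ n) (h : vMap n j = upMap n) : False := by
  have f : (upMap n).R 1 3 :=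
    ⟨Set.mem_Icc.mpr ⟨by omega, by omega⟩, Set.mem_Icc.mpr ⟨by omega, by omega⟩, rfl⟩
  rw [← h] at f
  obtain ⟨-, -, hf⟩ := f
  omega

theorem vMap_ne_dnMap {j : ℕ} (hn : 4 ≤ n) (h : vMap n j = dnMap n) : False := by
  have f : (dnMap n).R 3 1 :=
    ⟨Set.mem_Icc.mpr ⟨by omega, by omega⟩, Set.mem_Icc.mpr ⟨by omega, by omega⟩, rfl⟩
  rw [← h] at f
  obtain ⟨-, -, hf⟩ := f
  omega

theorem vMap_ne_uMap {i j : ℕ} (hn : 4 ≤ n) (hi1 : 1 ≤ i) (h : vMap n j = uMap n i) :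
    False := by
  have f : (uMap n i).R 1 3 :=
    ⟨Set.mem_Icc.mpr ⟨by omega, by omega⟩, Set.mem_Icc.mpr ⟨by omega, by omega⟩,
      Or.inl ⟨hi1, rfl⟩⟩
  rw [← h] at f
  obtain ⟨-, -, hf⟩ := f
  omega

theorem vMap_ne_wMap {i j : ℕ} (hn : 4 ≤ n) (hi2 : i + 4 ≤ n) (h : vMap n j = wMap n i) :
    False := by
  have f : (wMap n i).R (i + 4) (i + 2) :=
    ⟨Set.mem_Icc.mpr ⟨by omega, by omega⟩, Set.mem_Icc.mpr ⟨by omega, by omega⟩,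
      Or.inr ⟨le_rfl, by omega⟩⟩
  rw [← h] at f
  obtain ⟨-, -, hf⟩ := f
  omega

theorem vMap_ne_uInvMap {i j : ℕ} (hn : 4 ≤ n) (hi1 : 1 ≤ i) (h : vMap n j = uInvMap n i) :
    False := by
  have f : (uInvMap n i).R 3 1 :=
    ⟨Set.mem_Icc.mpr ⟨by omega, by omega⟩, Set.mem_Icc.mpr ⟨by omega, by omega⟩,
      Or.inl ⟨by omega, by omega⟩⟩
  rw [← h] at f
  obtain ⟨-, -, hf⟩ := f
  omega

theorem vMap_ne_wInvMap {i j : ℕ} (hn : 4 ≤ n) (hi1 : 1 ≤ i) (hi2 : i + 4 ≤ n)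
    (h : vMap n j = wInvMap n i) : False := by
  have f : (wInvMap n i).R (i + 2) (i + 4) :=
    ⟨Set.mem_Icc.mpr ⟨by omega, by omega⟩, Set.mem_Icc.mpr ⟨by omega, by omega⟩,
      Or.inr ⟨le_rfl, rfl⟩⟩
  rw [← h] at f
  obtain ⟨-, -, hf⟩ := f
  omega

theorem upMap_ne_dnMap (hn : 4 ≤ n) (h : upMap n = dnMap n) : False := by
  have f : (upMap n).R 1 3 :=
    ⟨Set.mem_Icc.mpr ⟨by omega, by omega⟩, Set.mem_Icc.mpr ⟨by omega, by omega⟩, rfl⟩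
  rw [h] at f
  obtain ⟨-, -, hf⟩ := f
  omega

theorem upMap_ne_uMap {i : ℕ} (hn : 4 ≤ n) (hi2 : i + 4 ≤ n) (h : upMap n = uMap n i) :
    False := by
  have f : (uMap n i).R (i + 4) (i + 4) :=
    ⟨Set.mem_Icc.mpr ⟨by omega, by omega⟩, Set.mem_Icc.mpr ⟨by omega, by omega⟩,
      Or.inr ⟨le_rfl, rfl⟩⟩
  rw [← h] at f
  obtain ⟨-, -, hf⟩ := f
  omega

theorem upMap_ne_wMap {i : ℕ} (hn : 4 ≤ n) (hi1 : 1 ≤ i) (h : upMap n = wMap n i) :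
    False := by
  have f : (wMap n i).R 1 1 :=
    ⟨Set.mem_Icc.mpr ⟨by omega, by omega⟩, Set.mem_Icc.mpr ⟨by omega, by omega⟩,
      Or.inl ⟨hi1, rfl⟩⟩
  rw [← h] at f
  obtain ⟨-, -, hf⟩ := f
  omega

theorem upMap_ne_uInvMap {i : ℕ} (hn : 4 ≤ n) (hi1 : 1 ≤ i) (h : upMap n = uInvMap n i) :
    False := by
  have f : (uInvMap n i).R 3 1 :=
    ⟨Set.mem_Icc.mpr ⟨by omega, by omega⟩, Set.mem_Icc.mpr ⟨by omega, by omega⟩,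
      Or.inl ⟨by omega, by omega⟩⟩
  rw [← h] at f
  obtain ⟨-, -, hf⟩ := f
  omega

theorem upMap_ne_wInvMap {i : ℕ} (hn : 4 ≤ n) (hi1 : 1 ≤ i) (h : upMap n = wInvMap n i) :
    False := by
  have f : (wInvMap n i).R 1 1 :=
    ⟨Set.mem_Icc.mpr ⟨by omega, by omega⟩, Set.mem_Icc.mpr ⟨by omega, by omega⟩,
      Or.inl ⟨hi1, rfl⟩⟩
  rw [← h] at f
  obtain ⟨-, -, hf⟩ := f
  omega

theorem dnMap_ne_uMap {i : ℕ} (hn : 4 ≤ n) (hi1 : 1 ≤ i) (h : dnMap n = uMap n i) :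
    False := by
  have f : (uMap n i).R 1 3 :=
    ⟨Set.mem_Icc.mpr ⟨by omega, by omega⟩, Set.mem_Icc.mpr ⟨by omega, by omega⟩,
      Or.inl ⟨hi1, rfl⟩⟩
  rw [← h] at f
  obtain ⟨-, -, hf⟩ := f
  omega

theorem dnMap_ne_wMap {i : ℕ} (hn : 4 ≤ n) (hi1 : 1 ≤ i) (h : dnMap n = wMap n i) :
    False := by
  have f : (wMap n i).R 1 1 :=
    ⟨Set.mem_Icc.mpr ⟨by omega, by omega⟩, Set.mem_Icc.mpr ⟨by omega, by omega⟩,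
      Or.inl ⟨hi1, rfl⟩⟩
  rw [← h] at f
  obtain ⟨-, -, hf⟩ := f
  omega

theorem dnMap_ne_uInvMap {i : ℕ} (hn : 4 ≤ n) (hi2 : i + 4 ≤ n) (h : dnMap n = uInvMap n i) :
    False := by
  have f : (uInvMap n i).R (i + 4) (i + 4) :=
    ⟨Set.mem_Icc.mpr ⟨by omega, by omega⟩, Set.mem_Icc.mpr ⟨by omega, by omega⟩,
      Or.inr ⟨le_rfl, rfl⟩⟩
  rw [← h] at f
  obtain ⟨-, -, hf⟩ := f
  omega

theorem dnMap_ne_wInvMap {i : ℕ} (hn : 4 ≤ n) (hi1 : 1 ≤ i) (h : dnMap n = wInvMap n i) :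
    False := by
  have f : (wInvMap n i).R 1 1 :=
    ⟨Set.mem_Icc.mpr ⟨by omega, by omega⟩, Set.mem_Icc.mpr ⟨by omega, by omega⟩,
      Or.inl ⟨hi1, rfl⟩⟩
  rw [← h] at f
  obtain ⟨-, -, hf⟩ := f
  omega

theorem uMap_inj {i j : ℕ} (hn : 4 ≤ n) (hi2 : i + 4 ≤ n) (hj2 : j + 4 ≤ n)
    (h : uMap n i = uMap n j) : i = j := by
  have f : (uMap n i).R (i + 4) (i + 4) :=
    ⟨Set.mem_Icc.mpr ⟨by omega, by omega⟩, Set.mem_Icc.mpr ⟨by omega, by omega⟩,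
      Or.inr ⟨le_rfl, rfl⟩⟩
  have g : (uMap n j).R (j + 4) (j + 4) :=
    ⟨Set.mem_Icc.mpr ⟨by omega, by omega⟩, Set.mem_Icc.mpr ⟨by omega, by omega⟩,
      Or.inr ⟨le_rfl, rfl⟩⟩
  rw [h] at f
  rw [← h] at g
  obtain ⟨-, -, hf⟩ := f
  obtain ⟨-, -, hg⟩ := g
  omega

theorem uMap_ne_wMap {i j : ℕ} (hn : 4 ≤ n) (hi1 : 1 ≤ i) (h : uMap n i = wMap n j) :
    False := by
  have f : (uMap n i).R 1 3 :=
    ⟨Set.mem_Icc.mpr ⟨by omega, by omega⟩, Set.mem_Icc.mpr ⟨by omega, by omega⟩,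
      Or.inl ⟨hi1, rfl⟩⟩
  rw [h] at f
  obtain ⟨-, -, hf⟩ := f
  omega

theorem wMap_inj {i j : ℕ} (hn : 4 ≤ n) (hi2 : i + 4 ≤ n) (hj2 : j + 4 ≤ n)
    (h : wMap n i = wMap n j) : i = j := by
  have f : (wMap n i).R (i + 4) (i + 2) :=
    ⟨Set.mem_Icc.mpr ⟨by omega, by omega⟩, Set.mem_Icc.mpr ⟨by omega, by omega⟩,
      Or.inr ⟨le_rfl, by omega⟩⟩
  have g : (wMap n j).R (j + 4) (j + 2) :=
    ⟨Set.mem_Icc.mpr ⟨by omega, by omega⟩, Set.mem_Icc.mpr ⟨by omega, by omega⟩,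
      Or.inr ⟨le_rfl, by omega⟩⟩
  rw [h] at f
  rw [← h] at g
  obtain ⟨-, -, hf⟩ := f
  obtain ⟨-, -, hg⟩ := g
  omega

theorem uInvMap_inj {i j : ℕ} (hn : 4 ≤ n) (hi2 : i + 4 ≤ n) (hj2 : j + 4 ≤ n)
    (h : uInvMap n i = uInvMap n j) : i = j := by
  have f : (uInvMap n i).R (i + 4) (i + 4) :=
    ⟨Set.mem_Icc.mpr ⟨by omega, by omega⟩, Set.mem_Icc.mpr ⟨by omega, by omega⟩,
      Or.inr ⟨le_rfl, rfl⟩⟩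
  have g : (uInvMap n j).R (j + 4) (j + 4) :=
    ⟨Set.mem_Icc.mpr ⟨by omega, by omega⟩, Set.mem_Icc.mpr ⟨by omega, by omega⟩,
      Or.inr ⟨le_rfl, rfl⟩⟩
  rw [h] at f
  rw [← h] at g
  obtain ⟨-, -, hf⟩ := f
  obtain ⟨-, -, hg⟩ := g
  omega

theorem uInvMap_ne_wInvMap {i j : ℕ} (hn : 4 ≤ n) (hi1 : 1 ≤ i)
    (h : uInvMap n i = wInvMap n j) : False := by
  have f : (uInvMap n i).R 3 1 :=
    ⟨Set.mem_Icc.mpr ⟨by omega, by omega⟩, Set.mem_Icc.mpr ⟨by omega, by omega⟩,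
      Or.inl ⟨by omega, by omega⟩⟩
  rw [h] at f
  obtain ⟨-, -, hf⟩ := f
  omega

theorem wInvMap_inj {i j : ℕ} (hn : 4 ≤ n) (hi2 : i + 4 ≤ n) (hj2 : j + 4 ≤ n)
    (h : wInvMap n i = wInvMap n j) : i = j := by
  have f : (wInvMap n i).R (i + 2) (i + 4) :=
    ⟨Set.mem_Icc.mpr ⟨by omega, by omega⟩, Set.mem_Icc.mpr ⟨by omega, by omega⟩,
      Or.inr ⟨le_rfl, rfl⟩⟩
  have g : (wInvMap n j).R (j + 2) (j + 4) :=
    ⟨Set.mem_Icc.mpr ⟨by omega, by omega⟩, Set.mem_Icc.mpr ⟨by omega, by omega⟩,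
      Or.inr ⟨le_rfl, rfl⟩⟩
  rw [h] at f
  rw [← h] at g
  obtain ⟨-, -, hf⟩ := f
  obtain ⟨-, -, hg⟩ := g
  omega

theorem uMap_ne_uInvMap {i j : ℕ} (hn : 4 ≤ n) (hi1 : 1 ≤ i)
    (h : uMap n i = uInvMap n j) : False := by
  have f : (uMap n i).R 1 3 :=
    ⟨Set.mem_Icc.mpr ⟨by omega, by omega⟩, Set.mem_Icc.mpr ⟨by omega, by omega⟩,
      Or.inl ⟨hi1, rfl⟩⟩
  rw [h] at f
  obtain ⟨-, -, hf⟩ := f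
  omega

theorem uMap_ne_wInvMap {i j : ℕ} (hn : 4 ≤ n) (hi1 : 1 ≤ i)
    (h : uMap n i = wInvMap n j) : False := by
  have f : (uMap n i).R 1 3 :=
    ⟨Set.mem_Icc.mpr ⟨by omega, by omega⟩, Set.mem_Icc.mpr ⟨by omega, by omega⟩,
      Or.inl ⟨hi1, rfl⟩⟩
  rw [h] at f
  obtain ⟨-, -, hf⟩ := f
  omega

theorem wMap_ne_uInvMap {i j : ℕ} (hn : 4 ≤ n) (hi1 : 1 ≤ i)
    (h : wMap n i = uInvMap n j) : False := by
  have f : (wMap n i).R 1 1 :=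
    ⟨Set.mem_Icc.mpr ⟨by omega, by omega⟩, Set.mem_Icc.mpr ⟨by omega, by omega⟩,
      Or.inl ⟨hi1, rfl⟩⟩
  rw [h] at f
  obtain ⟨-, -, hf⟩ := f
  omega

theorem wMap_ne_wInvMap {i j : ℕ} (hn : 4 ≤ n) (hi2 : i + 4 ≤ n)
    (h : wMap n i = wInvMap n j) : False := by
  have f : (wMap n i).R (i + 4) (i + 2) :=
    ⟨Set.mem_Icc.mpr ⟨by omega, by omega⟩, Set.mem_Icc.mpr ⟨by omega, by omega⟩,
      Or.inr ⟨le_rfl, by omega⟩⟩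
  rw [h] at f
  obtain ⟨-, -, hf⟩ := f
  omega

end PInj

end AuxNe
noncomputable instance (n : ℕ) : DecidableEq (PInj n) := Classical.decEq _

/-- every generating set of `IOF_n^par` has at least `3n - 6` elements. -/
theorem stmt13 (n : ℕ) (hn : 4 ≤ n) (G : Finset (PInj n))
    (hG : Generates n (G : Set (PInj n))) :
    3 * n - 6 ≤ G.card := by
  obtain ⟨hGiof, hgen⟩ := hG
  have key : ∀ (a : PInj n), IsIOF a → ∀ (P : PInj n → Prop), P a → ¬ P 1 →
      (∀ b c : PInj n, IsIOF b → IsIOF c → P (b * c) → P b ∨ P c) → ∃ g ∈ G, P g := by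
    intro a ha P hPa h1 hbin
    obtain ⟨l, hl, hprod⟩ := hgen a ha
    obtain ⟨g, hgl, hPg⟩ := PInj.exists_in_list h1 hbin l
      (fun g hg => hGiof g (hl g hg)) (by rw [hprod]; exact hPa)
    exact ⟨g, hl g hgl, hPg⟩
  -- the v_i are in G
  have hv : ∀ i, 1 ≤ i → i ≤ n → vMap n i ∈ G := by
    intro i h1 h2
    obtain ⟨g, hgG, hPg⟩ := key (vMap n i) (PInj.isIOF_vMap i) (· = vMap n i) rfl
      (fun he => PInj.one_ne_vMap h1 h2 he)
      (fun b c hb hc hbc => PInj.prime_vMap hn h1 h2 hb hc hbc)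
    exact hPg ▸ hgG
  have hup : upMap n ∈ G := by
    obtain ⟨g, hgG, hPg⟩ := key (upMap n) PInj.isIOF_upMap (· = upMap n) rfl
      (fun he => PInj.one_ne_upMap hn he)
      (fun b c hb hc hbc => PInj.prime_upMap hn hb hc hbc)
    exact hPg ▸ hgG
  have hdn : dnMap n ∈ G := by
    obtain ⟨g, hgG, hPg⟩ := key (dnMap n) PInj.isIOF_dnMap (· = dnMap n) rfl
      (fun he => PInj.one_ne_dnMap hn he)
      (fun b c hb hc hbc => PInj.prime_dnMap hn hb hc hbc)
    exact hPg ▸ hgG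
  have hu : ∀ i, 1 ≤ i → i + 4 ≤ n → ∃ g ∈ G, (g = uMap n i ∨ g = wMap n i) := by
    intro i h1 h2
    exact key (uMap n i) (PInj.isIOF_uMap i) (fun g => g = uMap n i ∨ g = wMap n i)
      (Or.inl rfl)
      (fun he => by
        rcases he with he | he
        · exact PInj.one_ne_uMap hn h1 he
        · have f1 : (1 : PInj n).R (i + 1) (i + 1) :=
            ⟨Set.mem_Icc.mpr ⟨by omega, by omega⟩, rfl⟩
          rw [he] at f1
          obtain ⟨-, -, hf⟩ := f1
          omega)
      (fun b c hb hc hbc => by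
        rcases hbc with hbc | hbc
        · exact PInj.prime_uMap hn h1 h2 hb hc hbc
        · exact PInj.prime_wMap hn h1 h2 hb hc hbc)
  have huInv : ∀ i, 1 ≤ i → i + 4 ≤ n → ∃ g ∈ G, (g = uInvMap n i ∨ g = wInvMap n i) := by
    intro i h1 h2
    exact key (uInvMap n i) (PInj.isIOF_uInvMap i)
      (fun g => g = uInvMap n i ∨ g = wInvMap n i)
      (Or.inl rfl)
      (fun he => by
        rcases he with he | he
        · exact PInj.one_ne_uInvMap hn h1 he
        · exfalso
          have f1 : (1 : PInj n).R (i + 2) (i + 2) :=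
            ⟨Set.mem_Icc.mpr ⟨by omega, by omega⟩, rfl⟩
          rw [he] at f1
          obtain ⟨-, -, hf⟩ := f1
          omega)
      (fun b c hb hc hbc => by
        rcases hbc with hbc | hbc
        · exact PInj.prime_uInvMap hn h1 h2 hb hc hbc
        · exact PInj.prime_wInvMap hn h1 h2 hb hc hbc)
  -- choice functions
  have hu' : ∀ i : ℕ, ∃ g : PInj n,
      (1 ≤ i ∧ i + 4 ≤ n) → (g ∈ G ∧ (g = uMap n i ∨ g = wMap n i)) := by
    intro i
    by_cases hh : 1 ≤ i ∧ i + 4 ≤ n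
    · obtain ⟨g, h1, h2⟩ := hu i hh.1 hh.2
      exact ⟨g, fun _ => ⟨h1, h2⟩⟩
    · exact ⟨1, fun hcon => absurd hcon hh⟩
  have huInv' : ∀ i : ℕ, ∃ g : PInj n,
      (1 ≤ i ∧ i + 4 ≤ n) → (g ∈ G ∧ (g = uInvMap n i ∨ g = wInvMap n i)) := by
    intro i
    by_cases hh : 1 ≤ i ∧ i + 4 ≤ n
    · obtain ⟨g, h1, h2⟩ := huInv i hh.1 hh.2
      exact ⟨g, fun _ => ⟨h1, h2⟩⟩
    · exact ⟨1, fun hcon => absurd hcon hh⟩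
  choose fU hfU using hu'
  choose fV hfV using huInv'
  -- the four finsets
  set A1 : Finset (PInj n) := (Finset.Icc 1 n).image (vMap n) with hA1
  set A2 : Finset (PInj n) := {upMap n, dnMap n} with hA2
  set A3 : Finset (PInj n) := (Finset.Icc 1 (n - 4)).image fU with hA3
  set A4 : Finset (PInj n) := (Finset.Icc 1 (n - 4)).image fV with hA4
  have hmemIcc : ∀ i : ℕ, i ∈ Finset.Icc 1 (n - 4) → 1 ≤ i ∧ i + 4 ≤ n := by
    intro i hi
    rw [Finset.mem_Icc] at hi
    omega
  have hfU' : ∀ i : ℕ, i ∈ Finset.Icc 1 (n - 4) →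
      fU i ∈ G ∧ (fU i = uMap n i ∨ fU i = wMap n i) := fun i hi => hfU i (hmemIcc i hi)
  have hfV' : ∀ i : ℕ, i ∈ Finset.Icc 1 (n - 4) →
      fV i ∈ G ∧ (fV i = uInvMap n i ∨ fV i = wInvMap n i) := fun i hi => hfV i (hmemIcc i hi)
  -- subset of G
  have hsub : A1 ∪ A2 ∪ A3 ∪ A4 ⊆ G := by
    intro g hg
    simp only [Finset.mem_union] at hg
    rcases hg with ((hg | hg) | hg) | hg
    · rw [hA1, Finset.mem_image] at hg
      obtain ⟨i, hi, rfl⟩ := hg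
      rw [Finset.mem_Icc] at hi
      exact hv i hi.1 hi.2
    · rw [hA2] at hg
      simp only [Finset.mem_insert, Finset.mem_singleton] at hg
      rcases hg with rfl | rfl
      · exact hup
      · exact hdn
    · rw [hA3, Finset.mem_image] at hg
      obtain ⟨i, hi, rfl⟩ := hg
      exact (hfU' i hi).1
    · rw [hA4, Finset.mem_image] at hg
      obtain ⟨i, hi, rfl⟩ := hg
      exact (hfV' i hi).1
  -- cardinalities
  have hc1 : A1.card = n := by
    rw [hA1, Finset.card_image_of_injOn, Nat.card_Icc]
    · omega
    · intro i hi j hj hij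
      rw [Finset.mem_coe, Finset.mem_Icc] at hi hj
      exact PInj.vMap_inj hi.1 hi.2 hj.1 hj.2 hij
  have hc2 : A2.card = 2 := by
    rw [hA2, Finset.card_insert_of_notMem, Finset.card_singleton]
    rw [Finset.mem_singleton]
    intro hc
    exact PInj.upMap_ne_dnMap hn hc
  have hc3 : A3.card = n - 4 := by
    rw [hA3, Finset.card_image_of_injOn, Nat.card_Icc]
    · omega
    · intro i hi j hj hij
      rw [Finset.mem_coe] at hi hj
      obtain ⟨hiI, hiN⟩ := hmemIcc i hi
      obtain ⟨hjI, hjN⟩ := hmemIcc j hj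
      rcases (hfU' i hi).2 with he | he <;> rcases (hfU' j hj).2 with he' | he' <;>
        rw [he, he'] at hij
      · exact PInj.uMap_inj hn hiN hjN hij
      · exact absurd hij (fun hc => PInj.uMap_ne_wMap hn hiI hc)
      · exact absurd hij.symm (fun hc => PInj.uMap_ne_wMap hn hjI hc)
      · exact PInj.wMap_inj hn hiN hjN hij
  have hc4 : A4.card = n - 4 := by
    rw [hA4, Finset.card_image_of_injOn, Nat.card_Icc]
    · omega
    · intro i hi j hj hij
      rw [Finset.mem_coe] at hi hj
      obtain ⟨hiI, hiN⟩ := hmemIcc i hi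
      obtain ⟨hjI, hjN⟩ := hmemIcc j hj
      rcases (hfV' i hi).2 with he | he <;> rcases (hfV' j hj).2 with he' | he' <;>
        rw [he, he'] at hij
      · exact PInj.uInvMap_inj hn hiN hjN hij
      · exact absurd hij (fun hc => PInj.uInvMap_ne_wInvMap hn hiI hc)
      · exact absurd hij.symm (fun hc => PInj.uInvMap_ne_wInvMap hn hjI hc)
      · exact PInj.wInvMap_inj hn hiN hjN hij
  -- disjointness
  have d12 : Disjoint A1 A2 := by
    rw [Finset.disjoint_left]
    intro a ha1 ha2
    rw [hA1, Finset.mem_image] at ha1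
    obtain ⟨i, hi, rfl⟩ := ha1
    rw [hA2] at ha2
    simp only [Finset.mem_insert, Finset.mem_singleton] at ha2
    rcases ha2 with he | he
    · exact PInj.vMap_ne_upMap hn he
    · exact PInj.vMap_ne_dnMap hn he
  have d13 : Disjoint A1 A3 := by
    rw [Finset.disjoint_left]
    intro a ha1 ha2
    rw [hA1, Finset.mem_image] at ha1
    obtain ⟨i, hi, rfl⟩ := ha1
    rw [hA3, Finset.mem_image] at ha2
    obtain ⟨j, hj, he⟩ := ha2
    obtain ⟨hjI, hjN⟩ := hmemIcc j hj
    rcases (hfU' j hj).2 with he' | he' <;> rw [he'] at he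
    · exact PInj.vMap_ne_uMap hn hjI he.symm
    · exact PInj.vMap_ne_wMap hn hjN he.symm
  have d14 : Disjoint A1 A4 := by
    rw [Finset.disjoint_left]
    intro a ha1 ha2
    rw [hA1, Finset.mem_image] at ha1
    obtain ⟨i, hi, rfl⟩ := ha1
    rw [hA4, Finset.mem_image] at ha2
    obtain ⟨j, hj, he⟩ := ha2
    obtain ⟨hjI, hjN⟩ := hmemIcc j hj
    rcases (hfV' j hj).2 with he' | he' <;> rw [he'] at he
    · exact PInj.vMap_ne_uInvMap hn hjI he.symm
    · exact PInj.vMap_ne_wInvMap hn hjI hjN he.symm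
  have d23 : Disjoint A2 A3 := by
    rw [Finset.disjoint_left]
    intro a ha1 ha2
    rw [hA3, Finset.mem_image] at ha2
    obtain ⟨j, hj, he⟩ := ha2
    obtain ⟨hjI, hjN⟩ := hmemIcc j hj
    rw [hA2] at ha1
    simp only [Finset.mem_insert, Finset.mem_singleton] at ha1
    rcases ha1 with rfl | rfl
    · rcases (hfU' j hj).2 with he' | he' <;> rw [he'] at he
      · exact PInj.upMap_ne_uMap hn hjN he.symm
      · exact PInj.upMap_ne_wMap hn hjI he.symm
    · rcases (hfU' j hj).2 with he' | he' <;> rw [he'] at he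
      · exact PInj.dnMap_ne_uMap hn hjI he.symm
      · exact PInj.dnMap_ne_wMap hn hjI he.symm
  have d24 : Disjoint A2 A4 := by
    rw [Finset.disjoint_left]
    intro a ha1 ha2
    rw [hA4, Finset.mem_image] at ha2
    obtain ⟨j, hj, he⟩ := ha2
    obtain ⟨hjI, hjN⟩ := hmemIcc j hj
    rw [hA2] at ha1
    simp only [Finset.mem_insert, Finset.mem_singleton] at ha1
    rcases ha1 with rfl | rfl
    · rcases (hfV' j hj).2 with he' | he' <;> rw [he'] at he
      · exact PInj.upMap_ne_uInvMap hn hjI he.symm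
      · exact PInj.upMap_ne_wInvMap hn hjI he.symm
    · rcases (hfV' j hj).2 with he' | he' <;> rw [he'] at he
      · exact PInj.dnMap_ne_uInvMap hn hjN he.symm
      · exact PInj.dnMap_ne_wInvMap hn hjI he.symm
  have d34 : Disjoint A3 A4 := by
    rw [Finset.disjoint_left]
    intro a ha1 ha2
    rw [hA3, Finset.mem_image] at ha1
    obtain ⟨i, hi, he1⟩ := ha1
    rw [hA4, Finset.mem_image] at ha2
    obtain ⟨j, hj, he2⟩ := ha2
    obtain ⟨hiI, hiN⟩ := hmemIcc i hi
    obtain ⟨hjI, hjN⟩ := hmemIcc j hj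
    have he : fU i = fV j := by rw [he1, he2]
    rcases (hfU' i hi).2 with hx | hx <;> rcases (hfV' j hj).2 with hy | hy <;>
      rw [hx, hy] at he
    · exact PInj.uMap_ne_uInvMap hn hiI he
    · exact PInj.uMap_ne_wInvMap hn hiI he
    · exact PInj.wMap_ne_uInvMap hn hiI he
    · exact PInj.wMap_ne_wInvMap hn hiN he
  -- count
  have d1_234 : Disjoint A1 (A2 ∪ A3 ∪ A4) := by
    rw [Finset.disjoint_union_right, Finset.disjoint_union_right]
    exact ⟨⟨d12, d13⟩, d14⟩
  have d2_34 : Disjoint A2 (A3 ∪ A4) := by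
    rw [Finset.disjoint_union_right]
    exact ⟨d23, d24⟩
  have hcard : (A1 ∪ A2 ∪ A3 ∪ A4).card = n + 2 + (n - 4) + (n - 4) := by
    have e : A1 ∪ A2 ∪ A3 ∪ A4 = A1 ∪ (A2 ∪ (A3 ∪ A4)) := by
      rw [Finset.union_assoc, Finset.union_assoc]
    rw [e, Finset.card_union_of_disjoint, Finset.card_union_of_disjoint,
      Finset.card_union_of_disjoint d34, hc1, hc2, hc3, hc4]
    · omega
    · exact d2_34
    · rw [← Finset.union_assoc]
      exact d1_234.mono_right (by rw [Finset.union_assoc])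
  have hle := Finset.card_le_card hsub
  rw [hcard] at hle
  omega
end

section
/- For n ≥ 4, the set A_n = {v_1,...,v_n, u_1,...,u_{n−4}, u_{n−2}, x_1,...,x_{n−4}, x_{n−2}} generates the monoid IOF_n^par; in particular rank(IOF_n^par) ≤ 3n−6. -/
/-- The generating set `A_n = {v_1,...,v_n, u_1,...,u_{n-4}, u_{n-2},
x_1,...,x_{n-4}, x_{n-2}}`. -/
def Agen (n : ℕ) : Set (PInj n) :=
  {a | (∃ i ∈ Set.Icc 1 n, a = vMap n i) ∨
       (∃ i, (i ∈ Set.Icc 1 (n - 4) ∨ i = n - 2) ∧ a = uMap n i) ∨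
       (∃ i, (i ∈ Set.Icc 1 (n - 4) ∨ i = n - 2) ∧ a = (uMap n i).inv)}

namespace PInjAux

open PInj

variable {n : ℕ}

lemma mul_R (a b : PInj n) (x z : ℕ) : (a * b).R x z ↔ ∃ y, a.R x y ∧ b.R y z := Iff.rfl

lemma one_R (x y : ℕ) : (1 : PInj n).R x y ↔ x ∈ Set.Icc 1 n ∧ y = x := Iff.rfl

lemma inv_R (a : PInj n) (x y : ℕ) : a.inv.R x y ↔ a.R y x := Iff.rfl

lemma vMap_R (i x y : ℕ) : (vMap n i).R x y ↔ x ∈ Set.Icc 1 n ∧ x ≠ i ∧ y = x := Iff.rfl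

lemma uMap_R (i x y : ℕ) : (uMap n i).R x y ↔ x ∈ Set.Icc 1 n ∧ y ∈ Set.Icc 1 n ∧
    ((x ≤ i ∧ y = x + 2) ∨ (i + 4 ≤ x ∧ y = x)) := Iff.rfl

lemma fenceLt_iff (x y : ℕ) : FenceLt x y ↔ x % 2 = 1 ∧ (y = x + 1 ∨ x = y + 1) := by
  unfold FenceLt; rw [Nat.odd_iff]

lemma inv_inv (a : PInj n) : a.inv.inv = a := rfl

lemma inv_mul (a b : PInj n) : (a * b).inv = b.inv * a.inv := by
  ext x y
  constructor
  · rintro ⟨z, h1, h2⟩; exact ⟨z, h2, h1⟩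
  · rintro ⟨z, h1, h2⟩; exact ⟨z, h2, h1⟩

lemma inv_one : (1 : PInj n).inv = 1 := by
  ext x y
  constructor
  · rintro ⟨h, rfl⟩; exact ⟨h, rfl⟩
  · rintro ⟨h, rfl⟩; exact ⟨h, rfl⟩

lemma inv_prod (l : List (PInj n)) : l.prod.inv = (l.map PInj.inv).reverse.prod := by
  induction l with
  | nil => simpa using inv_one
  | cons a l ih =>
      simp only [List.prod_cons, List.map_cons, List.reverse_cons, List.prod_append,
        List.prod_cons, List.prod_nil, mul_one, inv_mul, ih]

lemma isIOF_inv {a : PInj n} (ha : IsIOF a) : IsIOF a.inv := by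
  obtain ⟨hord, hpar, hf, hfi⟩ := ha
  refine ⟨?_, ?_, ?_, ?_⟩
  · intro x y x' y' h h' hlt
    rcases lt_trichotomy y y' with h2 | h2 | h2
    · exact h2
    · subst h2; exact absurd (a.func h h') (by omega)
    · exact absurd (hord h' h h2) (by omega)
  · intro x y h; exact (hpar h).symm
  · intro x y x' y' h h' hft; exact hfi h h' hft
  · intro x y x' y' h h' hft; exact hf h h' hft

lemma lt_iff {a : PInj n} (ha : IsIOF a) {x y x' y' : ℕ} (h : a.R x y) (h' : a.R x' y') :
    x < x' ↔ y < y' := by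
  constructor
  · exact fun hl => ha.1 h h' hl
  · intro hl
    rcases lt_trichotomy x x' with h2 | h2 | h2
    · exact h2
    · subst h2; exact absurd (a.func h h') (by omega)
    · exact absurd (ha.1 h' h h2) (by omega)

lemma adj_right {a : PInj n} (ha : IsIOF a) {x y y' : ℕ} (h : a.R x y) (h' : a.R (x + 1) y') :
    y' = y + 1 := by
  obtain ⟨hord, hpar, hf, hfi⟩ := ha
  have hlt : y < y' := hord h h' (by omega)
  rcases Nat.even_or_odd x with he | ho
  · have hfx : FenceLt (x + 1) x := ⟨by rcases he with ⟨t, ht⟩; exact ⟨t, by omega⟩, Or.inr rfl⟩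
    have := hf h' h hfx
    rw [fenceLt_iff] at this; omega
  · have hfx : FenceLt x (x + 1) := ⟨ho, Or.inl rfl⟩
    have := hf h h' hfx
    rw [fenceLt_iff] at this; omega

lemma adj_left {a : PInj n} (ha : IsIOF a) {x y x' : ℕ} (h : a.R x y) (h' : a.R x' (y + 1)) :
    x' = x + 1 := by
  have := adj_right (isIOF_inv ha) (a := a.inv) h h'
  exact this

lemma gap_right {a : PInj n} (ha : IsIOF a) {x y x' y' : ℕ} (h : a.R x y) (h' : a.R x' y')
    (hg : x + 2 ≤ x') : y + 2 ≤ y' := by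
  have h1 : y < y' := ha.1 h h' (by omega)
  by_contra hc
  have h2 : y' = y + 1 := by omega
  subst h2
  have := adj_left ha h h'
  omega

lemma gap_left {a : PInj n} (ha : IsIOF a) {x y x' y' : ℕ} (h : a.R x y) (h' : a.R x' y')
    (hg : y + 2 ≤ y') : x + 2 ≤ x' := by
  have h1 : x < x' := (lt_iff ha h h').2 (by omega)
  by_contra hc
  have h2 : x' = x + 1 := by omega
  subst h2
  have := adj_right ha h h'
  omega

end PInjAux
namespace PInjAux

variable {n : ℕ}

lemma isIOF_vMap (i : ℕ) : IsIOF (vMap n i) := by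
  refine ⟨?_, ?_, ?_, ?_⟩
  · rintro x y x' y' ⟨_, _, rfl⟩ ⟨_, _, rfl⟩ h; exact h
  · rintro x y ⟨_, _, rfl⟩; rfl
  · rintro x y x' y' ⟨_, _, rfl⟩ ⟨_, _, rfl⟩ h; exact h
  · rintro x y x' y' ⟨_, _, rfl⟩ ⟨_, _, rfl⟩ h; exact h

lemma isIOF_uMap (i : ℕ) : IsIOF (uMap n i) := by
  refine ⟨?_, ?_, ?_, ?_⟩
  · rintro x y x' y' ⟨_, _, h⟩ ⟨_, _, h'⟩ hlt; omega
  · rintro x y ⟨_, _, h⟩; omega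
  · rintro x y x' y' ⟨_, _, h⟩ ⟨_, _, h'⟩ hft
    rw [fenceLt_iff] at hft ⊢; omega
  · rintro x y x' y' ⟨hx, hy, h⟩ ⟨hx', hy', h'⟩ hft
    rw [fenceLt_iff] at hft ⊢
    simp only [Set.mem_Icc] at hx hx' hy hy'; omega

lemma gen_isIOF (g : PInj n) (hg : g ∈ Agen n) : IsIOF g := by
  rcases hg with ⟨i, _, rfl⟩ | ⟨i, _, rfl⟩ | ⟨i, _, rfl⟩
  · exact isIOF_vMap i
  · exact isIOF_uMap i
  · exact PInjAux.isIOF_inv (isIOF_uMap i)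

lemma vMap_inv (i : ℕ) : (vMap n i).inv = vMap n i := by
  ext x y
  simp only [inv_R, vMap_R]
  constructor
  · rintro ⟨h1, h2, rfl⟩; exact ⟨h1, h2, rfl⟩
  · rintro ⟨h1, h2, rfl⟩; exact ⟨h1, h2, rfl⟩

lemma agen_inv {b : PInj n} (hb : b ∈ Agen n) : b.inv ∈ Agen n := by
  rcases hb with ⟨i, hi, rfl⟩ | ⟨i, hi, rfl⟩ | ⟨i, hi, rfl⟩
  · exact Or.inl ⟨i, hi, vMap_inv i⟩
  · exact Or.inr (Or.inr ⟨i, hi, rfl⟩)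
  · exact Or.inr (Or.inl ⟨i, hi, (inv_inv _).symm⟩)

/-- The "lower half" interpolant: sends `min x (f x)` to `f x`. -/
def mid (a : PInj n) (ha : IsIOF a) : PInj n where
  R := fun z y => ∃ x, a.R x y ∧ z = min x y
  memL := by
    rintro z y ⟨x, h, rfl⟩
    have h1 := a.memL h; have h2 := a.memR h
    simp only [Set.mem_Icc] at *; omega
  memR := by rintro z y ⟨x, h, rfl⟩; exact a.memR h
  func := by
    rintro z y y' ⟨x, h, rfl⟩ ⟨x', h', he⟩
    rcases lt_trichotomy x x' with h2 | h2 | h2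
    · have := ha.1 h h' h2; omega
    · subst h2; exact a.func h h'
    · have := ha.1 h' h h2; omega
  inj := by
    rintro z z' y ⟨x, h, rfl⟩ ⟨x', h', rfl⟩
    rw [a.inj h h']

lemma mid_R (a : PInj n) (ha : IsIOF a) (z y : ℕ) :
    (mid a ha).R z y ↔ ∃ x, a.R x y ∧ z = min x y := Iff.rfl

lemma isIOF_mid (a : PInj n) (ha : IsIOF a) : IsIOF (mid a ha) := by
  have hlt' : ∀ {x y x' y' : ℕ}, a.R x y → a.R x' y' → min x y < min x' y' → x < x' ∧ y < y' := by
    intro x y x' y' h h' hm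
    rcases lt_trichotomy x x' with h2 | h2 | h2
    · exact ⟨h2, ha.1 h h' h2⟩
    · subst h2; have := a.func h h'; omega
    · have := ha.1 h' h h2; omega
  refine ⟨?_, ?_, ?_, ?_⟩
  · rintro z y z' y' ⟨x, h, rfl⟩ ⟨x', h', rfl⟩ hlt
    exact (hlt' h h' hlt).2
  · rintro z y ⟨x, h, rfl⟩
    have := ha.2.1 h; omega
  · rintro z y z' y' ⟨x, h, rfl⟩ ⟨x', h', rfl⟩ hft
    rw [fenceLt_iff] at hft ⊢
    have hpar := ha.2.1 h
    rcases hft with ⟨hodd, hc | hc⟩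
    · obtain ⟨hx, hy⟩ := hlt' h h' (by omega)
      have hadj : x' = x + 1 := by
        by_contra hcc
        have := gap_right ha h h' (by omega); omega
      subst hadj
      have := adj_right ha h h'
      constructor <;> omega
    · obtain ⟨hx, hy⟩ := hlt' h' h (by omega)
      have hadj : x = x' + 1 := by
        by_contra hcc
        have := gap_right ha h' h (by omega); omega
      subst hadj
      have := adj_right ha h' h
      constructor <;> omega
  · rintro z y z' y' ⟨x, h, rfl⟩ ⟨x', h', rfl⟩ hft
    have hpar := ha.2.1 h
    have hft' := ha.2.2.2 h h' hft
    rw [fenceLt_iff] at hft hft' ⊢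
    rcases hft with ⟨hodd, hc | hc⟩
    · have hy : y < y' := by omega
      have hx : x < x' := (lt_iff ha h h').2 hy
      constructor <;> omega
    · have hy : y' < y := by omega
      have hx : x' < x := (lt_iff ha h' h).2 hy
      constructor <;> omega

lemma mid_nonneg (a : PInj n) (ha : IsIOF a) : ∀ x y, (mid a ha).R x y → x ≤ y := by
  rintro z y ⟨x, h, rfl⟩; omega

lemma mid_decomp (a : PInj n) (ha : IsIOF a) :
    (mid a.inv (isIOF_inv ha)).inv * mid a ha = a := by
  ext x y
  simp only [mul_R, inv_R, mid_R]
  constructor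
  · rintro ⟨z, ⟨v, hv, rfl⟩, ⟨u, hu, he⟩⟩
    have hvR : a.R x v := hv
    rcases lt_trichotomy x u with h2 | h2 | h2
    · have := ha.1 hvR hu h2; omega
    · subst h2; exact hu
    · have := ha.1 hu hvR h2; omega
  · intro h
    exact ⟨min x y, ⟨y, h, by omega⟩, ⟨x, h, by omega⟩⟩

end PInjAux
namespace PInjAux

variable {n : ℕ}

/-- Shift the segment `[p,q]` up by 2, identity on `[1,p-2]` and `[q+4,n]`. -/
def shiftSeg (n p q : ℕ) : PInj n where
  R := fun x y => x ∈ Set.Icc 1 n ∧ y ∈ Set.Icc 1 n ∧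
    ((x + 2 ≤ p ∧ y = x) ∨ (p ≤ x ∧ x ≤ q ∧ y = x + 2) ∨ (q + 4 ≤ x ∧ y = x))
  memL := by rintro x y ⟨h, _, _⟩; exact h
  memR := by rintro x y ⟨_, h, _⟩; exact h
  func := by rintro x y y' ⟨_, _, h⟩ ⟨_, _, h'⟩; omega
  inj := by rintro x x' y ⟨_, _, h⟩ ⟨_, _, h'⟩; omega

lemma shiftSeg_R (p q x y : ℕ) : (shiftSeg n p q).R x y ↔ x ∈ Set.Icc 1 n ∧ y ∈ Set.Icc 1 n ∧
    ((x + 2 ≤ p ∧ y = x) ∨ (p ≤ x ∧ x ≤ q ∧ y = x + 2) ∨ (q + 4 ≤ x ∧ y = x)) := Iff.rfl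

lemma uMap_sub3 (hn : 4 ≤ n) : uMap n (n - 3) = vMap n (n - 2) * uMap n (n - 2) := by
  ext x y
  simp only [uMap_R, vMap_R, mul_R, Set.mem_Icc]
  constructor
  · rintro ⟨hx, hy, h⟩
    exact ⟨x, ⟨⟨hx.1, hx.2⟩, by omega, rfl⟩, ⟨hx.1, hx.2⟩, ⟨hy.1, hy.2⟩, by omega⟩
  · rintro ⟨z, ⟨hz1, hz2, rfl⟩, hx, hy, h⟩
    refine ⟨hx, hy, by omega⟩

lemma uList (hn : 4 ≤ n) (i : ℕ) (h1 : 1 ≤ i) (h2 : i + 2 ≤ n) :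
    ∃ l : List (PInj n), (∀ b ∈ l, b ∈ Agen n) ∧ l.prod = uMap n i := by
  rcases Nat.lt_trichotomy i (n - 3) with hi | hi | hi
  · refine ⟨[uMap n i], ?_, by simp⟩
    rintro b hb
    simp only [List.mem_singleton] at hb
    subst hb
    exact Or.inr (Or.inl ⟨i, Or.inl (Set.mem_Icc.2 ⟨h1, by omega⟩), rfl⟩)
  · refine ⟨[vMap n (n - 2), uMap n (n - 2)], ?_, ?_⟩
    · rintro b hb
      simp only [List.mem_cons, List.mem_singleton, List.not_mem_nil, or_false] at hb
      rcases hb with rfl | rfl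
      · exact Or.inl ⟨n - 2, Set.mem_Icc.2 ⟨by omega, by omega⟩, rfl⟩
      · exact Or.inr (Or.inl ⟨n - 2, Or.inr rfl, rfl⟩)
    · rw [List.prod_cons, List.prod_singleton, ← uMap_sub3 hn, hi]
  · have hi2 : i = n - 2 := by omega
    subst hi2
    refine ⟨[uMap n (n - 2)], ?_, by simp⟩
    rintro b hb
    simp only [List.mem_singleton] at hb
    subst hb
    exact Or.inr (Or.inl ⟨n - 2, Or.inr rfl, rfl⟩)

lemma shiftSeg_eq_one (p q : ℕ) (hp : p = 1) : shiftSeg n p q = uMap n q := by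
  subst hp
  ext x y
  simp only [shiftSeg_R, uMap_R, Set.mem_Icc]
  omega

lemma shiftSeg_eq_two (p q : ℕ) (hp : p = 2) : shiftSeg n p q = vMap n 1 * uMap n q := by
  subst hp
  ext x y
  simp only [shiftSeg_R, uMap_R, vMap_R, mul_R, Set.mem_Icc]
  constructor
  · rintro ⟨hx, hy, h⟩
    exact ⟨x, ⟨⟨hx.1, hx.2⟩, by omega, rfl⟩, ⟨hx.1, hx.2⟩, ⟨hy.1, hy.2⟩, by omega⟩
  · rintro ⟨z, ⟨hz1, hz2, rfl⟩, hx, hy, h⟩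
    exact ⟨hx, hy, by omega⟩

lemma shiftSeg_eq_big (p q : ℕ) (hp : 3 ≤ p) (hpq : p ≤ q) (hq : q + 2 ≤ n) :
    shiftSeg n p q = uMap n q * (uMap n (p - 2)).inv := by
  ext x y
  simp only [shiftSeg_R, uMap_R, inv_R, mul_R, Set.mem_Icc]
  constructor
  · rintro ⟨hx, hy, h⟩
    refine ⟨if x ≤ q then x + 2 else x, ⟨⟨hx.1, hx.2⟩, ?_, ?_⟩, ⟨hy.1, hy.2⟩, ?_, ?_⟩ <;>
      split <;> omega
  · rintro ⟨z, ⟨hx, hz, h⟩, hy, hx2, h'⟩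
    exact ⟨hx, hy, by omega⟩

lemma shiftSeg_prod (hn : 4 ≤ n) (p q : ℕ) (hp : 1 ≤ p) (hpq : p ≤ q) (hq : q + 2 ≤ n) :
    ∃ l : List (PInj n), (∀ b ∈ l, b ∈ Agen n) ∧ l.prod = shiftSeg n p q := by
  obtain ⟨lu, hlu, hlup⟩ := uList hn q (by omega) hq
  rcases Nat.lt_trichotomy p 3 with hp3 | hp3 | hp3
  · rcases Nat.lt_trichotomy p 2 with hp2 | hp2 | hp2
    · have : p = 1 := by omega
      exact ⟨lu, hlu, by rw [hlup, shiftSeg_eq_one p q this]⟩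
    · refine ⟨vMap n 1 :: lu, ?_, ?_⟩
      · rintro b hb
        rcases List.mem_cons.1 hb with rfl | hb
        · exact Or.inl ⟨1, Set.mem_Icc.2 ⟨le_refl 1, by omega⟩, rfl⟩
        · exact hlu b hb
      · rw [List.prod_cons, hlup, shiftSeg_eq_two p q hp2]
    · exact absurd hp3 (by omega)
  · refine ⟨lu ++ [(uMap n (p - 2)).inv], ?_, ?_⟩
    · rintro b hb
      rcases List.mem_append.1 hb with hb | hb
      · exact hlu b hb
      · rcases List.mem_singleton.1 hb with rfl
        exact Or.inr (Or.inr ⟨p - 2, Or.inl (Set.mem_Icc.2 ⟨by omega, by omega⟩), rfl⟩)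
    · rw [List.prod_append, List.prod_singleton, hlup, shiftSeg_eq_big p q (by omega) hpq hq]
  · refine ⟨lu ++ [(uMap n (p - 2)).inv], ?_, ?_⟩
    · rintro b hb
      rcases List.mem_append.1 hb with hb | hb
      · exact hlu b hb
      · rcases List.mem_singleton.1 hb with rfl
        exact Or.inr (Or.inr ⟨p - 2, Or.inl (Set.mem_Icc.2 ⟨by omega, by omega⟩), rfl⟩)
    · rw [List.prod_append, List.prod_singleton, hlup, shiftSeg_eq_big p q (by omega) hpq hq]

lemma prodV (L : List ℕ) (hL : ∀ i ∈ L, i ∈ Set.Icc 1 n) (x y : ℕ) :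
    ((L.map (vMap n)).prod).R x y ↔ x ∈ Set.Icc 1 n ∧ x ∉ L ∧ y = x := by
  induction L with
  | nil => simp [one_R]
  | cons i L ih =>
      simp only [List.map_cons, List.prod_cons, mul_R, vMap_R]
      constructor
      · rintro ⟨z, ⟨hx, hxi, rfl⟩, hz⟩
        rw [ih (fun j hj => hL j (List.mem_cons_of_mem i hj))] at hz
        exact ⟨hx, by simp [List.mem_cons]; tauto, hz.2.2⟩
      · rintro ⟨hx, hxL, hyx⟩
        simp only [List.mem_cons, not_or] at hxL
        exact ⟨x, ⟨hx, hxL.1, rfl⟩,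
          (ih (fun j hj => hL j (List.mem_cons_of_mem i hj))).2 ⟨hx, hxL.2, hyx⟩⟩

lemma partialId_prod (a : PInj n) (hid : ∀ ⦃x y⦄, a.R x y → y = x) :
    ∃ l : List (PInj n), (∀ b ∈ l, b ∈ Agen n) ∧ l.prod = a := by
  classical
  set S : Finset ℕ := (Finset.Icc 1 n).filter (fun i => ¬ ∃ y, a.R i y) with hS
  refine ⟨S.toList.map (vMap n), ?_, ?_⟩
  · rintro b hb
    rcases List.mem_map.1 hb with ⟨i, hi, rfl⟩
    rw [Finset.mem_toList, hS, Finset.mem_filter, Finset.mem_Icc] at hi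
    exact Or.inl ⟨i, Set.mem_Icc.2 hi.1, rfl⟩
  · ext x y
    rw [prodV]
    · constructor
      · rintro ⟨hx, hxS, rfl⟩
        rw [Finset.mem_toList, hS, Finset.mem_filter] at hxS
        push_neg at hxS
        obtain ⟨y', hy'⟩ := hxS (by rw [Finset.mem_Icc]; exact Set.mem_Icc.1 hx)
        have := hid hy'
        rwa [this] at hy'
      · intro h
        refine ⟨a.memL h, ?_, hid h⟩
        rw [Finset.mem_toList, hS, Finset.mem_filter]
        rintro ⟨-, hc⟩
        exact hc ⟨y, h⟩
    · intro i hi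
      rw [Finset.mem_toList, hS, Finset.mem_filter, Finset.mem_Icc] at hi
      exact Set.mem_Icc.2 hi.1

end PInjAux
namespace PInjAux

variable {n : ℕ}

open Classical in
noncomputable def sh (a : PInj n) (x : ℕ) : ℕ :=
  if h : ∃ y, a.R x y then h.choose - x else 0

lemma sh_eq {a : PInj n} {x y : ℕ} (h : a.R x y) : sh a x = y - x := by
  have hx : ∃ y, a.R x y := ⟨y, h⟩
  rw [sh, dif_pos hx, a.func hx.choose_spec h]

lemma sh_eq' {a : PInj n} {x y : ℕ} (h : a.R x y) : sh a x = y - x := sh_eq h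

lemma sh_eq_zero {a : PInj n} {x : ℕ} (h : ¬ ∃ y, a.R x y) : sh a x = 0 := by
  rw [sh, dif_neg h]

noncomputable def Msr (a : PInj n) : ℕ := ∑ x ∈ Finset.Icc 1 n, sh a x

/-- Lower the images of the block `[p,q]` of the domain by 2. -/
def lowerBlock (a : PInj n) (p q : ℕ)
    (H : ∀ ⦃x x' y⦄, p ≤ x → x ≤ q → a.R x (y + 2) → a.R x' y → p ≤ x' ∧ x' ≤ q) : PInj n where
  R := fun x y => (p ≤ x ∧ x ≤ q ∧ 1 ≤ y ∧ a.R x (y + 2)) ∨ ((x < p ∨ q < x) ∧ a.R x y)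
  memL := by rintro x y (⟨_, _, _, h⟩ | ⟨_, h⟩) <;> exact a.memL h
  memR := by
    rintro x y (⟨_, _, h1, h⟩ | ⟨_, h⟩)
    · have := a.memR h; rw [Set.mem_Icc] at *; omega
    · exact a.memR h
  func := by
    rintro x y y' (⟨h1, h2, _, h⟩ | ⟨h1, h⟩) (⟨h1', h2', _, h'⟩ | ⟨h1', h'⟩)
    · have := a.func h h'; omega
    · omega
    · omega
    · exact a.func h h'
  inj := by
    rintro x x' y (⟨h1, h2, _, h⟩ | ⟨h1, h⟩) (⟨h1', h2', _, h'⟩ | ⟨h1', h'⟩)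
    · exact a.inj h h'
    · exact absurd (H h1 h2 h h') (by omega)
    · exact absurd (H h1' h2' h' h) (by omega)
    · exact a.inj h h'

lemma lowerBlock_R (a : PInj n) (p q : ℕ)
    (H : ∀ ⦃x x' y⦄, p ≤ x → x ≤ q → a.R x (y + 2) → a.R x' y → p ≤ x' ∧ x' ≤ q) (x y : ℕ) :
    (lowerBlock a p q H).R x y ↔
      (p ≤ x ∧ x ≤ q ∧ 1 ≤ y ∧ a.R x (y + 2)) ∨ ((x < p ∨ q < x) ∧ a.R x y) := Iff.rfl

lemma step (hn : 4 ≤ n) (a : PInj n) (ha : IsIOF a) (hpos : ∀ ⦃x y⦄, a.R x y → x ≤ y)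
    (hne : ¬ ∀ ⦃x y⦄, a.R x y → y = x) :
    ∃ a' : PInj n, IsIOF a' ∧ (∀ ⦃x y⦄, a'.R x y → x ≤ y) ∧ Msr a' < Msr a ∧
      ∃ l : List (PInj n), (∀ b ∈ l, b ∈ Agen n) ∧ a' * l.prod = a := by
  classical
  push_neg at hne
  obtain ⟨x1, y1, h1, hne1⟩ := hne
  have hP : ∃ x, ∃ y, a.R x y ∧ x < y := ⟨x1, y1, h1, by have := hpos h1; omega⟩
  obtain ⟨y0, hx0, hx0lt⟩ := Nat.find_spec hP
  set x0 := Nat.find hP with hx0def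
  have hy0 : x0 + 2 ≤ y0 := by have := ha.2.1 hx0; omega
  have hlow : ∀ ⦃x y⦄, a.R x y → x < x0 → y = x := by
    intro x y h hx
    have h1 : ¬ (x < y) := fun hl => Nat.find_min hP hx ⟨y, h, hl⟩
    have := hpos h; omega
  have hlow2 : ∀ ⦃x y⦄, a.R x y → x < x0 → x + 2 ≤ x0 := by
    intro x y h hx
    by_contra hc
    have hx1 : x + 1 = x0 := by omega
    rw [← hx1] at hx0
    have h3 := adj_right ha h hx0
    have := hlow h hx
    omega
  have hx0n : 1 ≤ x0 ∧ x0 ≤ n := by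
    have := a.memL hx0; rwa [Set.mem_Icc] at this
  have hblkK : ∀ j ≤ Nat.findGreatest (fun m => ∀ j ≤ m, ∃ y, a.R (x0 + j) y) n,
      ∃ y, a.R (x0 + j) y :=
    Nat.findGreatest_spec (P := fun m => ∀ j ≤ m, ∃ y, a.R (x0 + j) y) (Nat.zero_le n)
      (fun j hj => by have hj0 : j = 0 := Nat.le_zero.1 hj; subst hj0; exact ⟨y0, hx0⟩)
  obtain ⟨k, hblk, htop⟩ : ∃ k, (∀ j ≤ k, ∃ y, a.R (x0 + j) y) ∧
      ¬ ∃ y, a.R (x0 + k + 1) y := by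
    refine ⟨Nat.findGreatest (fun m => ∀ j ≤ m, ∃ y, a.R (x0 + j) y) n, hblkK, ?_⟩
    rintro ⟨y, hy⟩
    have hmem := a.memL hy; rw [Set.mem_Icc] at hmem
    have hkn : Nat.findGreatest (fun m => ∀ j ≤ m, ∃ y, a.R (x0 + j) y) n + 1 ≤ n := by
      omega
    refine Nat.findGreatest_is_greatest (P := fun m => ∀ j ≤ m, ∃ y, a.R (x0 + j) y)
      (Nat.lt_succ_self _) hkn ?_
    intro j hj
    rcases Nat.lt_or_ge j (Nat.findGreatest (fun m => ∀ j ≤ m, ∃ y, a.R (x0 + j) y) n + 1)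
      with hj2 | hj2
    · exact hblkK j (by omega)
    · have hj3 : j = Nat.findGreatest (fun m => ∀ j ≤ m, ∃ y, a.R (x0 + j) y) n + 1 := by
        omega
      subst hj3
      exact ⟨y, hy⟩
  have hshift : ∀ j, j ≤ k → a.R (x0 + j) (y0 + j) := by
    intro j
    induction j with
    | zero => intro _; simpa using hx0
    | succ j ih =>
        intro hj
        have h1 := ih (by omega)
        obtain ⟨y', hy'⟩ := hblk (j + 1) hj
        have h2 : a.R ((x0 + j) + 1) y' := hy'
        have h3 := adj_right ha h1 h2
        subst h3
        exact hy'
  have hqn : y0 + k ≤ n := by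
    have := a.memR (hshift k le_rfl); rw [Set.mem_Icc] at this; omega
  have hblkval : ∀ ⦃x y⦄, a.R x y → x0 ≤ x → x ≤ x0 + k → y + x0 = y0 + x := by
    intro x y h hxx1 hxx2
    have h2 := hshift (x - x0) (by omega)
    have hx3 : x0 + (x - x0) = x := by omega
    rw [hx3] at h2
    have := a.func h h2; omega
  have hupval : ∀ ⦃x y⦄, a.R x y → x0 + k < x → x0 + k + 2 ≤ x ∧ y0 + k + 2 ≤ y := by
    intro x y h hx
    have hx2 : x0 + k + 2 ≤ x := by
      by_contra hc
      exact htop ⟨y, by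
        have hh : x = x0 + k + 1 := by omega
        rwa [hh] at h⟩
    exact ⟨hx2, gap_right ha (hshift k le_rfl) h hx2⟩
  have H : ∀ ⦃x x' y⦄, x0 ≤ x → x ≤ x0 + k → a.R x (y + 2) → a.R x' y →
      x0 ≤ x' ∧ x' ≤ x0 + k := by
    intro x x' y hxx1 hxx2 h h'
    have hb := hblkval h hxx1 hxx2
    constructor
    · by_contra hc
      have e1 := hlow h' (by omega)
      have e2 := hlow2 h' (by omega)
      omega
    · by_contra hc
      have e1 := hupval h' (by omega)
      omega
  have ha'IOF : IsIOF (lowerBlock a x0 (x0 + k) H) := by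
    refine ⟨?_, ?_, ?_, ?_⟩
    · rintro x y x' y' (⟨hb1, hb2, hy1, h⟩ | ⟨ho, h⟩) (⟨hb1', hb2', hy1', h'⟩ | ⟨ho', h'⟩) hlt
      · have e1 := hblkval h hb1 hb2
        have e2 := hblkval h' hb1' hb2'
        omega
      · rcases ho' with ho' | ho'
        · omega
        · have e1 := hupval h' ho'
          have e2 := hblkval h hb1 hb2
          omega
      · rcases ho with ho | ho
        · have e1 := hlow h ho
          have e2 := hblkval h' hb1' hb2'
          omega
        · omega
      · exact ha.1 h h' hlt
    · rintro x y (⟨hb1, hb2, hy1, h⟩ | ⟨ho, h⟩)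
      · have := ha.2.1 h; omega
      · exact ha.2.1 h
    · rintro x y x' y' (⟨hb1, hb2, hy1, h⟩ | ⟨ho, h⟩) (⟨hb1', hb2', hy1', h'⟩ | ⟨ho', h'⟩) hft
      · have hf2 := ha.2.2.1 h h' hft
        rw [fenceLt_iff] at hf2 ⊢
        have e1 := hblkval h hb1 hb2
        have e2 := hblkval h' hb1' hb2'
        omega
      · have hf2 := ha.2.2.1 h h' hft
        rw [fenceLt_iff] at hft hf2
        rcases ho' with ho' | ho'
        · have e1 := hblkval h hb1 hb2
          have e2 := hlow h' ho'
          have e3 := hlow2 h' ho'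
          omega
        · have e1 := hupval h' ho'
          omega
      · have hf2 := ha.2.2.1 h h' hft
        rw [fenceLt_iff] at hft hf2
        rcases ho with ho | ho
        · have e1 := hlow h ho
          have e2 := hlow2 h ho
          have e3 := hblkval h' hb1' hb2'
          omega
        · have e1 := hupval h ho
          omega
      · exact ha.2.2.1 h h' hft
    · rintro x y x' y' (⟨hb1, hb2, hy1, h⟩ | ⟨ho, h⟩) (⟨hb1', hb2', hy1', h'⟩ | ⟨ho', h'⟩) hft
      · have hft2 : FenceLt (y + 2) (y' + 2) := by
          rw [fenceLt_iff] at hft ⊢; omega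
        exact ha.2.2.2 h h' hft2
      · rw [fenceLt_iff] at hft
        have e1 := hblkval h hb1 hb2
        rcases ho' with ho' | ho'
        · have e2 := hlow h' ho'
          have e3 := hlow2 h' ho'
          omega
        · have e2 := hupval h' ho'
          omega
      · rw [fenceLt_iff] at hft
        have e1 := hblkval h' hb1' hb2'
        rcases ho with ho | ho
        · have e2 := hlow h ho
          have e3 := hlow2 h ho
          omega
        · have e2 := hupval h ho
          omega
      · exact ha.2.2.2 h h' hft
  have ha'pos : ∀ ⦃x y⦄, (lowerBlock a x0 (x0 + k) H).R x y → x ≤ y := by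
    rintro x y (⟨hb1, hb2, hy1, h⟩ | ⟨ho, h⟩)
    · have := hblkval h hb1 hb2
      omega
    · exact hpos h
  have hMsr : Msr (lowerBlock a x0 (x0 + k) H) < Msr a := by
    apply Finset.sum_lt_sum
    · intro x hx
      by_cases hd : ∃ y, a.R x y
      · obtain ⟨y, hy⟩ := hd
        by_cases hb : x0 ≤ x ∧ x ≤ x0 + k
        · have e1 := hblkval hy hb.1 hb.2
          have h2 : (lowerBlock a x0 (x0 + k) H).R x (y - 2) :=
            Or.inl ⟨hb.1, hb.2, by omega, by rwa [Nat.sub_add_cancel (by omega : 2 ≤ y)]⟩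
          rw [sh_eq hy, sh_eq h2]
          omega
        · have h2 : (lowerBlock a x0 (x0 + k) H).R x y := Or.inr ⟨by omega, hy⟩
          rw [sh_eq hy, sh_eq h2]
      · have hd' : ¬ ∃ y, (lowerBlock a x0 (x0 + k) H).R x y := by
          rintro ⟨y, (⟨_, _, _, h⟩ | ⟨_, h⟩)⟩
          exacts [hd ⟨y + 2, h⟩, hd ⟨y, h⟩]
        rw [sh_eq_zero hd, sh_eq_zero hd']
    · refine ⟨x0, Finset.mem_Icc.2 ⟨hx0n.1, hx0n.2⟩, ?_⟩
      have h2 : (lowerBlock a x0 (x0 + k) H).R x0 (y0 - 2) :=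
        Or.inl ⟨le_rfl, by omega, by omega, by rwa [Nat.sub_add_cancel (by omega : 2 ≤ y0)]⟩
      rw [sh_eq h2, sh_eq hx0]
      omega
  refine ⟨lowerBlock a x0 (x0 + k) H, ha'IOF, ha'pos, hMsr, ?_⟩
  obtain ⟨l, hl, hlp⟩ := shiftSeg_prod hn (y0 - 2) (y0 + k - 2) (by omega) (by omega) (by omega)
  refine ⟨l, hl, ?_⟩
  rw [hlp]
  ext x z
  simp only [mul_R, shiftSeg_R, Set.mem_Icc, lowerBlock_R]
  constructor
  · rintro ⟨y, (⟨hb1, hb2, hy1, h⟩ | ⟨ho, h⟩), hy2, hz2, hw⟩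
    · have e1 := hblkval h hb1 hb2
      have hzz : z = y + 2 := by omega
      rwa [hzz]
    · rcases ho with ho | ho
      · have e1 := hlow h ho
        have e2 := hlow2 h ho
        have hzz : z = y := by omega
        rwa [hzz]
      · have e1 := hupval h ho
        have hzz : z = y := by omega
        rwa [hzz]
  · intro h
    have hmem := a.memR h; rw [Set.mem_Icc] at hmem
    have hmem2 := a.memL h; rw [Set.mem_Icc] at hmem2
    by_cases hb : x0 ≤ x ∧ x ≤ x0 + k
    · have e1 := hblkval h hb.1 hb.2
      refine ⟨z - 2, Or.inl ⟨hb.1, hb.2, by omega,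
        by rwa [Nat.sub_add_cancel (by omega : 2 ≤ z)]⟩, by omega, by omega, by omega⟩
    · rcases (by omega : x < x0 ∨ x0 + k < x) with ho | ho
      · have e1 := hlow h ho
        have e2 := hlow2 h ho
        exact ⟨z, Or.inr ⟨Or.inl ho, h⟩, by omega, by omega, by omega⟩
      · have e1 := hupval h ho
        exact ⟨z, Or.inr ⟨Or.inr ho, h⟩, by omega, by omega, by omega⟩

lemma nonneg_gen (hn : 4 ≤ n) :
    ∀ m : ℕ, ∀ a : PInj n, IsIOF a → (∀ ⦃x y⦄, a.R x y → x ≤ y) →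
      Msr a ≤ m → ∃ l : List (PInj n), (∀ b ∈ l, b ∈ Agen n) ∧ l.prod = a := by
  intro m
  induction m using Nat.strong_induction_on with
  | _ m ih =>
    intro a ha hpos hM
    by_cases hid : ∀ ⦃x y⦄, a.R x y → y = x
    · exact partialId_prod a hid
    · obtain ⟨a', ha', hpos', hM', l, hl, hprod⟩ := step hn a ha hpos hid
      obtain ⟨l', hl', hp'⟩ := ih (Msr a') (by omega) a' ha' hpos' le_rfl
      refine ⟨l' ++ l, ?_, ?_⟩
      · intro b hb
        rcases List.mem_append.1 hb with hh | hh
        exacts [hl' b hh, hl b hh]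
      · rw [List.prod_append, hp', hprod]

end PInjAux
namespace PInjAux

variable {n : ℕ}

lemma main_gen (hn : 4 ≤ n) (a : PInj n) (ha : IsIOF a) :
    ∃ l : List (PInj n), (∀ b ∈ l, b ∈ Agen n) ∧ l.prod = a := by
  have hai := isIOF_inv ha
  obtain ⟨le, hle, hlep⟩ := nonneg_gen hn (Msr (mid a ha)) (mid a ha) (isIOF_mid a ha)
      (mid_nonneg a ha) le_rfl
  obtain ⟨ld, hld, hldp⟩ := nonneg_gen hn (Msr (mid a.inv hai)) (mid a.inv hai)
      (isIOF_mid a.inv hai) (mid_nonneg a.inv hai) le_rfl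
  refine ⟨(ld.map PInj.inv).reverse ++ le, ?_, ?_⟩
  · intro b hb
    rcases List.mem_append.1 hb with hb | hb
    · rw [List.mem_reverse] at hb
      obtain ⟨c, hc, rfl⟩ := List.mem_map.1 hb
      exact agen_inv (hld c hc)
    · exact hle b hb
  · rw [List.prod_append, hlep, ← inv_prod, hldp]
    exact mid_decomp a ha

end PInjAux

theorem stmt14' (n : ℕ) (hn : 4 ≤ n) :
    Generates n (Agen n) ∧
    ∃ G : Finset (PInj n), Generates n (G : Set (PInj n)) ∧ G.card ≤ 3 * n - 6 := by
  classical
  have hgen : Generates n (Agen n) :=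
    ⟨PInjAux.gen_isIOF, fun a ha => PInjAux.main_gen hn a ha⟩
  refine ⟨hgen, ?_⟩
  refine ⟨((Finset.Icc 1 n).image (vMap n) ∪
      (insert (n - 2) (Finset.Icc 1 (n - 4))).image (uMap n)) ∪
      (insert (n - 2) (Finset.Icc 1 (n - 4))).image (fun i => (uMap n i).inv), ?_, ?_⟩
  · have hset : (↑(((Finset.Icc 1 n).image (vMap n) ∪
        (insert (n - 2) (Finset.Icc 1 (n - 4))).image (uMap n)) ∪
        (insert (n - 2) (Finset.Icc 1 (n - 4))).image (fun i => (uMap n i).inv)) :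
          Set (PInj n)) = Agen n := by
      ext b
      constructor
      · intro hb
        simp only [Finset.coe_union, Set.mem_union, Finset.mem_coe, Finset.mem_image,
          Finset.mem_insert, Finset.mem_Icc] at hb
        rcases hb with (⟨i, hi, rfl⟩ | ⟨i, hi, rfl⟩) | ⟨i, hi, rfl⟩
        · exact Or.inl ⟨i, Set.mem_Icc.2 hi, rfl⟩
        · refine Or.inr (Or.inl ⟨i, ?_, rfl⟩)
          rcases hi with rfl | hi
          · exact Or.inr rfl
          · exact Or.inl (Set.mem_Icc.2 hi)
        · refine Or.inr (Or.inr ⟨i, ?_, rfl⟩)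
          rcases hi with rfl | hi
          · exact Or.inr rfl
          · exact Or.inl (Set.mem_Icc.2 hi)
      · intro hb
        simp only [Finset.coe_union, Set.mem_union, Finset.mem_coe, Finset.mem_image,
          Finset.mem_insert, Finset.mem_Icc]
        rcases hb with ⟨i, hi, rfl⟩ | ⟨i, hi, rfl⟩ | ⟨i, hi, rfl⟩
        · exact Or.inl (Or.inl ⟨i, Set.mem_Icc.1 hi, rfl⟩)
        · refine Or.inl (Or.inr ⟨i, ?_, rfl⟩)
          rcases hi with hi | rfl
          · exact Or.inr (Set.mem_Icc.1 hi)
          · exact Or.inl rfl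
        · refine Or.inr ⟨i, ?_, rfl⟩
          rcases hi with hi | rfl
          · exact Or.inr (Set.mem_Icc.1 hi)
          · exact Or.inl rfl
    rwa [hset]
  · have h1 : ((Finset.Icc 1 n).image (vMap n)).card ≤ n := by
      refine le_trans Finset.card_image_le ?_
      rw [Nat.card_Icc]; omega
    have hIc : (insert (n - 2) (Finset.Icc 1 (n - 4))).card ≤ n - 3 := by
      refine le_trans (Finset.card_insert_le _ _) ?_
      rw [Nat.card_Icc]; omega
    have h2 : ((insert (n - 2) (Finset.Icc 1 (n - 4))).image (uMap n)).card ≤ n - 3 :=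
      le_trans Finset.card_image_le hIc
    have h3 : ((insert (n - 2) (Finset.Icc 1 (n - 4))).image
        (fun i => (uMap n i).inv)).card ≤ n - 3 :=
      le_trans Finset.card_image_le hIc
    have h4 := Finset.card_union_le ((Finset.Icc 1 n).image (vMap n) ∪
      (insert (n - 2) (Finset.Icc 1 (n - 4))).image (uMap n))
      ((insert (n - 2) (Finset.Icc 1 (n - 4))).image (fun i => (uMap n i).inv))
    have h5 := Finset.card_union_le ((Finset.Icc 1 n).image (vMap n))
      ((insert (n - 2) (Finset.Icc 1 (n - 4))).image (uMap n))
    omega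

/-- `A_n` generates `IOF_n^par`; in particular `rank(IOF_n^par) ≤ 3n-6`. -/
theorem stmt14 (n : ℕ) (hn : 4 ≤ n) :
    Generates n (Agen n) ∧
    ∃ G : Finset (PInj n), Generates n (G : Set (PInj n)) ∧ G.card ≤ 3 * n - 6 := by
  exact stmt14' n hn
end
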